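/- arXiv:2309.02475 — 3 statements merged into one kernel-verified Lean document; each statement's English description precedes it below -/
import Mathlib

section
/- In the two-walker randomly-selected edge-reinforced walk on {-1,0,1} with current edge weights a (left) and b (right) when both walkers are at the center, let E_{a,b,l} be the expectation of the new left-weight fraction times the indicator that the walkers need exactly 2l steps to meet again at the center, and let q_{a,b,l} be the probability that the last walker returning to the center comes from the left node and the walkers need exactly 2l steps. Then E_{a,b,l} = q_{a,b,l} = 2^{-l} · a/(a+b) for all l ≥ 1. -/
open MeasureTheory

lemma step_integral {Ω : Type*} [m : MeasurableSpace Ω] (μ : Measure Ω) [IsProbabilityMeasure μ]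
    (F : Filtration ℕ m) (n : ℕ) (A : Set Ω) (hA : MeasurableSet A) (g : Ω → ℝ)
    (hg : μ[Set.indicator A (fun _ => (1 : ℝ)) | F n] =ᵐ[μ] g)
    (B : Set Ω) (hB : MeasurableSet[F n] B)
    (f : Ω → ℝ) (hf : StronglyMeasurable[F n] f) (C : ℝ) (hfC : ∀ ω, |f ω| ≤ C) :
    ∫ ω in B ∩ A, f ω ∂μ = ∫ ω in B, f ω * g ω ∂μ := by
  have hmle : F n ≤ m := F.le n
  have hfm : StronglyMeasurable f := hf.mono hmle
  have hintf : Integrable f μ := by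
    refine (integrable_const C).mono' hfm.aestronglyMeasurable ?_
    exact Filter.Eventually.of_forall fun ω => by rw [Real.norm_eq_abs]; exact hfC ω
  have hprod : (f * A.indicator (fun _ => (1:ℝ))) = fun ω => A.indicator f ω := by
    ext ω; by_cases h : ω ∈ A <;> simp [h]
  have hint1A : Integrable (A.indicator fun _ => (1:ℝ)) μ :=
    (integrable_const (1:ℝ)).indicator hA
  have hintfA : Integrable (f * A.indicator (fun _ => (1:ℝ))) μ := by
    rw [hprod]; exact hintf.indicator hA
  have h1 : ∫ ω in B ∩ A, f ω ∂μ = ∫ ω in B, (f * A.indicator (fun _ => (1:ℝ))) ω ∂μ := by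
    rw [hprod, setIntegral_indicator hA]
  have h2 : ∫ ω in B, (f * A.indicator (fun _ => (1:ℝ))) ω ∂μ
      = ∫ ω in B, (μ[(f * A.indicator (fun _ => (1:ℝ))) | F n]) ω ∂μ :=
    (setIntegral_condExp hmle hintfA hB).symm
  have h3 : μ[(f * A.indicator (fun _ => (1:ℝ))) | F n] =ᵐ[μ] fun ω => f ω * g ω := by
    have := condExp_mul_of_stronglyMeasurable_left (μ := μ) hf hintfA hint1A
    filter_upwards [this, hg] with ω h1 h2
    simp only [Pi.mul_apply] at h1 ⊢
    rw [h1, h2]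
  rw [h1, h2]
  exact setIntegral_congr_ae (hmle B hB) (h3.mono fun ω hω _ => hω)


set_option maxHeartbeats 2000000 in
/-- Two walkers on the path `{-1, 0, 1}` both start at the center with
edge weights `a` (left) and `b` (right); at each step one of the two walkers is
chosen uniformly at random to move, a walker at the center moves left/right with
probabilities proportional to the current edge weights, a walker at an outer node
returns to the center, and a traversed edge gains weight `1`. With `τ` the first time
`≥ 1` at which both walkers are back at the center,
`E_{a,b,l} = E[(left fraction at τ)·1_{τ = 2l}]` and `q_{a,b,l} = P[the last walker
returning to the center comes from the left node and τ = 2l]` satisfy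
`E_{a,b,l} = q_{a,b,l} = 2^{-l}·a/(a+b)` for all `l ≥ 1`. -/
theorem two_walker_urn_meeting_quantities
    {Ω : Type*} [m : MeasurableSpace Ω] (μ : Measure Ω) [IsProbabilityMeasure μ]
    (F : Filtration ℕ m) (X1 X2 : ℕ → Ω → ℤ) (wl wr : ℕ → Ω → ℝ) (a b : ℝ)
    (ha : 0 < a) (hb : 0 < b)
    (hadX1 : Adapted F X1) (hadX2 : Adapted F X2)
    (hadwl : Adapted F wl) (hadwr : Adapted F wr)
    (hX10 : X1 0 = fun _ => 0) (hX20 : X2 0 = fun _ => 0)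
    (hwl0 : wl 0 = fun _ => a) (hwr0 : wr 0 = fun _ => b)
    (hrange1 : ∀ n ω, X1 n ω ∈ Set.Icc (-1 : ℤ) 1)
    (hrange2 : ∀ n ω, X2 n ω ∈ Set.Icc (-1 : ℤ) 1)
    -- exactly one walker moves at each step, by exactly one step
    (hmove : ∀ n ω,
      (X2 (n + 1) ω = X2 n ω ∧ |X1 (n + 1) ω - X1 n ω| = 1) ∨
      (X1 (n + 1) ω = X1 n ω ∧ |X2 (n + 1) ω - X2 n ω| = 1))
    -- the weight of a traversed edge increases by 1
    (hwl : ∀ n ω, wl (n + 1) ω = wl n ω +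
      (if (X1 n ω = -1 ∧ X1 (n + 1) ω = 0) ∨ (X1 n ω = 0 ∧ X1 (n + 1) ω = -1) ∨
          (X2 n ω = -1 ∧ X2 (n + 1) ω = 0) ∨ (X2 n ω = 0 ∧ X2 (n + 1) ω = -1)
        then 1 else 0))
    (hwr : ∀ n ω, wr (n + 1) ω = wr n ω +
      (if (X1 n ω = 1 ∧ X1 (n + 1) ω = 0) ∨ (X1 n ω = 0 ∧ X1 (n + 1) ω = 1) ∨
          (X2 n ω = 1 ∧ X2 (n + 1) ω = 0) ∨ (X2 n ω = 0 ∧ X2 (n + 1) ω = 1)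
        then 1 else 0))
    -- conditional transition probabilities: a uniformly chosen walker moves,
    -- from the center proportionally to the edge weights, from ±1 back to 0
    (hcond1up : ∀ n,
      μ[Set.indicator {ω | X1 (n + 1) ω = X1 n ω + 1} (fun _ => (1 : ℝ)) | F n]
        =ᵐ[μ] fun ω => (1 / 2) *
          (if X1 n ω = 0 then wr n ω / (wl n ω + wr n ω)
           else if X1 n ω = -1 then 1 else 0))
    (hcond1down : ∀ n,
      μ[Set.indicator {ω | X1 (n + 1) ω = X1 n ω - 1} (fun _ => (1 : ℝ)) | F n]
        =ᵐ[μ] fun ω => (1 / 2) *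
          (if X1 n ω = 0 then wl n ω / (wl n ω + wr n ω)
           else if X1 n ω = 1 then 1 else 0))
    (hcond2up : ∀ n,
      μ[Set.indicator {ω | X2 (n + 1) ω = X2 n ω + 1} (fun _ => (1 : ℝ)) | F n]
        =ᵐ[μ] fun ω => (1 / 2) *
          (if X2 n ω = 0 then wr n ω / (wl n ω + wr n ω)
           else if X2 n ω = -1 then 1 else 0))
    (hcond2down : ∀ n,
      μ[Set.indicator {ω | X2 (n + 1) ω = X2 n ω - 1} (fun _ => (1 : ℝ)) | F n]
        =ᵐ[μ] fun ω => (1 / 2) *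
          (if X2 n ω = 0 then wl n ω / (wl n ω + wr n ω)
           else if X2 n ω = 1 then 1 else 0)) :
    ∀ l : ℕ, 1 ≤ l →
      -- E_{a,b,l}: expected left-weight fraction at the meeting time, on {τ = 2l}
      (∫ ω in {ω | sInf {k | 1 ≤ k ∧ X1 k ω = 0 ∧ X2 k ω = 0} = 2 * l},
          wl (2 * l) ω / (wl (2 * l) ω + wr (2 * l) ω) ∂μ) =
        (1 / 2) ^ l * (a / (a + b)) ∧
      -- q_{a,b,l}: the last returning walker comes from the left node, and τ = 2l
      (μ {ω | sInf {k | 1 ≤ k ∧ X1 k ω = 0 ∧ X2 k ω = 0} = 2 * l ∧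
          (X1 (2 * l - 1) ω = -1 ∨ X2 (2 * l - 1) ω = -1)}).toReal =
        (1 / 2) ^ l * (a / (a + b)) := by

  -- structural lemmas
  have habs : ∀ x y : ℤ, |x - y| = 1 → x = y + 1 ∨ x = y - 1 := by
    intro x y h
    rcases (abs_eq (by norm_num : (0:ℤ) ≤ 1)).mp h with h | h <;> omega
  have hmv : ∀ n ω,
      (X2 (n+1) ω = X2 n ω ∧ (X1 (n+1) ω = X1 n ω + 1 ∨ X1 (n+1) ω = X1 n ω - 1)) ∨
      (X1 (n+1) ω = X1 n ω ∧ (X2 (n+1) ω = X2 n ω + 1 ∨ X2 (n+1) ω = X2 n ω - 1)) := by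
    intro n ω
    rcases hmove n ω with ⟨h1, h2⟩ | ⟨h1, h2⟩
    · exact Or.inl ⟨h1, habs _ _ h2⟩
    · exact Or.inr ⟨h1, habs _ _ h2⟩
  have hr1 : ∀ n ω, -1 ≤ X1 n ω ∧ X1 n ω ≤ 1 := fun n ω => Set.mem_Icc.mp (hrange1 n ω)
  have hr2 : ∀ n ω, -1 ≤ X2 n ω ∧ X2 n ω ≤ 1 := fun n ω => Set.mem_Icc.mp (hrange2 n ω)
  have hpar : ∀ n ω, (2:ℤ) ∣ (X1 n ω + X2 n ω - n) := by
    intro n ω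
    induction n with
    | zero => simp [hX10, hX20]
    | succ n ih =>
      rcases hmv n ω with ⟨h1, h2 | h2⟩ | ⟨h1, h2 | h2⟩ <;> · push_cast [Nat.cast_succ] at ih ⊢; omega
  have hsum : ∀ n ω, wl n ω + wr n ω = a + b + n := by
    intro n ω
    induction n with
    | zero => simp [hwl0, hwr0]
    | succ n ih =>
      rw [hwl n ω, hwr n ω]
      have q1 := hr1 n ω; have q1' := hr1 (n+1) ω
      have q2 := hr2 n ω; have q2' := hr2 (n+1) ω
      rcases hmv n ω with ⟨h1, h2⟩ | ⟨h1, h2⟩ <;>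
      · rcases h2 with h2 | h2 <;>
        · have hPQ :
              (((X1 n ω = -1 ∧ X1 (n + 1) ω = 0) ∨ (X1 n ω = 0 ∧ X1 (n + 1) ω = -1) ∨
                (X2 n ω = -1 ∧ X2 (n + 1) ω = 0) ∨ (X2 n ω = 0 ∧ X2 (n + 1) ω = -1)) ∧
               ¬((X1 n ω = 1 ∧ X1 (n + 1) ω = 0) ∨ (X1 n ω = 0 ∧ X1 (n + 1) ω = 1) ∨
                (X2 n ω = 1 ∧ X2 (n + 1) ω = 0) ∨ (X2 n ω = 0 ∧ X2 (n + 1) ω = 1))) ∨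
              (¬((X1 n ω = -1 ∧ X1 (n + 1) ω = 0) ∨ (X1 n ω = 0 ∧ X1 (n + 1) ω = -1) ∨
                (X2 n ω = -1 ∧ X2 (n + 1) ω = 0) ∨ (X2 n ω = 0 ∧ X2 (n + 1) ω = -1)) ∧
               ((X1 n ω = 1 ∧ X1 (n + 1) ω = 0) ∨ (X1 n ω = 0 ∧ X1 (n + 1) ω = 1) ∨
                (X2 n ω = 1 ∧ X2 (n + 1) ω = 0) ∨ (X2 n ω = 0 ∧ X2 (n + 1) ω = 1))) := by
            omega
          rcases hPQ with ⟨hP, hQ⟩ | ⟨hP, hQ⟩ <;>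
            simp only [if_pos, if_neg, hP, hQ, if_true, if_false] <;>
            · push_cast; linarith
  have hwlb : ∀ n ω, a ≤ wl n ω := by
    intro n ω
    induction n with
    | zero => simp [hwl0]
    | succ n ih => rw [hwl n ω]; split <;> linarith
  have hwrb : ∀ n ω, b ≤ wr n ω := by
    intro n ω
    induction n with
    | zero => simp [hwr0]
    | succ n ih => rw [hwr n ω]; split <;> linarith
  have hwlub : ∀ n ω, |wl n ω| ≤ a + b + n := by
    intro n ω
    have h1 := hwlb n ω; have h2 := hwrb n ω; have h3 := hsum n ω
    rw [abs_le]; constructor <;> [nlinarith [Nat.cast_nonneg (α := ℝ) n]; linarith]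
  -- measurability helpers
  have hXm1 : ∀ n, Measurable (X1 n) := fun n => (hadX1 n).mono (F.le n) le_rfl
  have hXm2 : ∀ n, Measurable (X2 n) := fun n => (hadX2 n).mono (F.le n) le_rfl
  have hmX1 : ∀ n (c : ℤ), MeasurableSet[F n] {ω | X1 n ω = c} := by
    intro n c
    have : {ω | X1 n ω = c} = X1 n ⁻¹' {c} := by ext ω; simp
    rw [this]; exact (hadX1 n) (measurableSet_singleton c)
  have hmX2 : ∀ n (c : ℤ), MeasurableSet[F n] {ω | X2 n ω = c} := by
    intro n c
    have : {ω | X2 n ω = c} = X2 n ⁻¹' {c} := by ext ω; simp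
    rw [this]; exact (hadX2 n) (measurableSet_singleton c)
  have hmX1' : ∀ n (c : ℤ), MeasurableSet {ω | X1 n ω = c} := fun n c => F.le n _ (hmX1 n c)
  have hmX2' : ∀ n (c : ℤ), MeasurableSet {ω | X2 n ω = c} := fun n c => F.le n _ (hmX2 n c)
  have hmAup1 : ∀ n, MeasurableSet {ω | X1 (n+1) ω = X1 n ω + 1} := by
    intro n
    have : {ω | X1 (n+1) ω = X1 n ω + 1} = (fun ω => X1 (n+1) ω - X1 n ω) ⁻¹' {1} := by
      ext ω; simp; omega
    rw [this]; exact ((hXm1 (n+1)).sub (hXm1 n)) (measurableSet_singleton 1)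
  have hmAdn1 : ∀ n, MeasurableSet {ω | X1 (n+1) ω = X1 n ω - 1} := by
    intro n
    have : {ω | X1 (n+1) ω = X1 n ω - 1} = (fun ω => X1 (n+1) ω - X1 n ω) ⁻¹' {-1} := by
      ext ω; simp; omega
    rw [this]; exact ((hXm1 (n+1)).sub (hXm1 n)) (measurableSet_singleton (-1))
  have hmAup2 : ∀ n, MeasurableSet {ω | X2 (n+1) ω = X2 n ω + 1} := by
    intro n
    have : {ω | X2 (n+1) ω = X2 n ω + 1} = (fun ω => X2 (n+1) ω - X2 n ω) ⁻¹' {1} := by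
      ext ω; simp; omega
    rw [this]; exact ((hXm2 (n+1)).sub (hXm2 n)) (measurableSet_singleton 1)
  have hmAdn2 : ∀ n, MeasurableSet {ω | X2 (n+1) ω = X2 n ω - 1} := by
    intro n
    have : {ω | X2 (n+1) ω = X2 n ω - 1} = (fun ω => X2 (n+1) ω - X2 n ω) ⁻¹' {-1} := by
      ext ω; simp; omega
    rw [this]; exact ((hXm2 (n+1)).sub (hXm2 n)) (measurableSet_singleton (-1))
  -- integrability helper
  have hintf : ∀ (f : Ω → ℝ) (C : ℝ), StronglyMeasurable f → (∀ ω, |f ω| ≤ C) →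
      Integrable f μ := by
    intro f C hf hC
    refine (integrable_const C).mono' hf.aestronglyMeasurable ?_
    exact Filter.Eventually.of_forall fun ω => by rw [Real.norm_eq_abs]; exact hC ω
  have hintwl : ∀ n, Integrable (wl n) μ := fun n =>
    hintf (wl n) (a+b+n) ((hadwl n).mono (F.le n) le_rfl).stronglyMeasurable (hwlub n)
  have hint1 : Integrable (fun _ : Ω => (1:ℝ)) μ := integrable_const 1
  -- disjoint-union splitting of set integrals
  have hunion : ∀ (S T : Set Ω), MeasurableSet T → Disjoint S T → ∀ f : Ω → ℝ,
      Integrable f μ → ∫ ω in S ∪ T, f ω ∂μ = (∫ ω in S, f ω ∂μ) + ∫ ω in T, f ω ∂μ :=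
    fun S T hT hd f hf => setIntegral_union hd hT hf.integrableOn hf.integrableOn
  -- splitting an integral over an odd time by which walker is at the center
  have hsplitOdd : ∀ (n : ℕ), n % 2 = 1 → ∀ B : Set Ω, MeasurableSet B → ∀ f : Ω → ℝ, Integrable f μ →
      ∫ ω in B, f ω ∂μ =
        (∫ ω in B ∩ {ω | X2 n ω = 0}, f ω ∂μ) + ∫ ω in B ∩ {ω | X1 n ω = 0}, f ω ∂μ := by
    intro n hn B hB f hf
    have hBeq : B = (B ∩ {ω | X2 n ω = 0}) ∪ (B ∩ {ω | X1 n ω = 0}) := by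
      ext ω
      have hp := hpar n ω
      have q1 := hr1 n ω; have q2 := hr2 n ω
      simp only [Set.mem_union, Set.mem_inter_iff, Set.mem_setOf_eq]
      constructor
      · intro hB
        have : X2 n ω = 0 ∨ X1 n ω = 0 := by omega
        tauto
      · tauto
    have hd : Disjoint (B ∩ {ω | X2 n ω = 0}) (B ∩ {ω | X1 n ω = 0}) := by
      rw [Set.disjoint_left]
      rintro ω ⟨-, h2⟩ ⟨-, h1⟩
      have hp := hpar n ω
      simp only [Set.mem_setOf_eq] at h1 h2
      omega
    conv_lhs => rw [hBeq]
    exact hunion _ _ (hB.inter (hmX1' n 0)) hd f hf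
  -- one-step "return with probability 1/2" for walker 1 at a fixed outer site
  have hhalf1 : ∀ (n : ℕ) (s : ℤ), s = -1 ∨ s = 1 → ∀ B : Set Ω, MeasurableSet[F n] B →
      (∀ ω ∈ B, X1 n ω = s) → ∀ (f : Ω → ℝ) (C : ℝ), StronglyMeasurable[F n] f →
      (∀ ω, |f ω| ≤ C) →
      ∫ ω in B ∩ {ω | X1 (n+1) ω = 0}, f ω ∂μ = (1/2) * ∫ ω in B, f ω ∂μ := by
    intro n s hs B hB hBs f C hf hC
    rcases hs with hs | hs
    · have hBA : B ∩ {ω | X1 (n+1) ω = 0} = B ∩ {ω | X1 (n+1) ω = X1 n ω + 1} := by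
        ext ω
        simp only [Set.mem_inter_iff, Set.mem_setOf_eq]
        constructor <;> rintro ⟨hBω, h⟩ <;> exact ⟨hBω, by have := hBs ω hBω; omega⟩
      rw [hBA, step_integral μ F n _ (hmAup1 n) _ (hcond1up n) B hB f hf C hC]
      have : ∫ ω in B, f ω * ((1/2) * (if X1 n ω = 0 then wr n ω / (wl n ω + wr n ω)
          else if X1 n ω = -1 then 1 else 0)) ∂μ = ∫ ω in B, f ω * (1/2) ∂μ := by
        refine setIntegral_congr_fun (F.le n B hB) fun ω hω => ?_
        have := hBs ω hω
        rw [this, hs]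
        norm_num
      rw [this, integral_mul_const, mul_comm]
    · have hBA : B ∩ {ω | X1 (n+1) ω = 0} = B ∩ {ω | X1 (n+1) ω = X1 n ω - 1} := by
        ext ω
        simp only [Set.mem_inter_iff, Set.mem_setOf_eq]
        constructor <;> rintro ⟨hBω, h⟩ <;> exact ⟨hBω, by have := hBs ω hBω; omega⟩
      rw [hBA, step_integral μ F n _ (hmAdn1 n) _ (hcond1down n) B hB f hf C hC]
      have : ∫ ω in B, f ω * ((1/2) * (if X1 n ω = 0 then wl n ω / (wl n ω + wr n ω)
          else if X1 n ω = 1 then 1 else 0)) ∂μ = ∫ ω in B, f ω * (1/2) ∂μ := by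
        refine setIntegral_congr_fun (F.le n B hB) fun ω hω => ?_
        have := hBs ω hω
        rw [this, hs]
        norm_num
      rw [this, integral_mul_const, mul_comm]
  have hhalf2 : ∀ (n : ℕ) (s : ℤ), s = -1 ∨ s = 1 → ∀ B : Set Ω, MeasurableSet[F n] B →
      (∀ ω ∈ B, X2 n ω = s) → ∀ (f : Ω → ℝ) (C : ℝ), StronglyMeasurable[F n] f →
      (∀ ω, |f ω| ≤ C) →
      ∫ ω in B ∩ {ω | X2 (n+1) ω = 0}, f ω ∂μ = (1/2) * ∫ ω in B, f ω ∂μ := by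
    intro n s hs B hB hBs f C hf hC
    rcases hs with hs | hs
    · have hBA : B ∩ {ω | X2 (n+1) ω = 0} = B ∩ {ω | X2 (n+1) ω = X2 n ω + 1} := by
        ext ω
        simp only [Set.mem_inter_iff, Set.mem_setOf_eq]
        constructor <;> rintro ⟨hBω, h⟩ <;> exact ⟨hBω, by have := hBs ω hBω; omega⟩
      rw [hBA, step_integral μ F n _ (hmAup2 n) _ (hcond2up n) B hB f hf C hC]
      have : ∫ ω in B, f ω * ((1/2) * (if X2 n ω = 0 then wr n ω / (wl n ω + wr n ω)
          else if X2 n ω = -1 then 1 else 0)) ∂μ = ∫ ω in B, f ω * (1/2) ∂μ := by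
        refine setIntegral_congr_fun (F.le n B hB) fun ω hω => ?_
        have := hBs ω hω
        rw [this, hs]
        norm_num
      rw [this, integral_mul_const, mul_comm]
    · have hBA : B ∩ {ω | X2 (n+1) ω = 0} = B ∩ {ω | X2 (n+1) ω = X2 n ω - 1} := by
        ext ω
        simp only [Set.mem_inter_iff, Set.mem_setOf_eq]
        constructor <;> rintro ⟨hBω, h⟩ <;> exact ⟨hBω, by have := hBs ω hBω; omega⟩
      rw [hBA, step_integral μ F n _ (hmAdn2 n) _ (hcond2down n) B hB f hf C hC]
      have : ∫ ω in B, f ω * ((1/2) * (if X2 n ω = 0 then wl n ω / (wl n ω + wr n ω)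
          else if X2 n ω = 1 then 1 else 0)) ∂μ = ∫ ω in B, f ω * (1/2) ∂μ := by
        refine setIntegral_congr_fun (F.le n B hB) fun ω hω => ?_
        have := hBs ω hω
        rw [this, hs]
        norm_num
      rw [this, integral_mul_const, mul_comm]
  have hhalf1' : ∀ (n : ℕ) (B : Set Ω), MeasurableSet[F n] B →
      (∀ ω ∈ B, X1 n ω = -1 ∨ X1 n ω = 1) → ∀ (f : Ω → ℝ) (C : ℝ),
      StronglyMeasurable[F n] f → (∀ ω, |f ω| ≤ C) →
      ∫ ω in B ∩ {ω | X1 (n+1) ω = 0}, f ω ∂μ = (1/2) * ∫ ω in B, f ω ∂μ := by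
    intro n B hB hBs f C hf hC
    have hfint : Integrable f μ := hintf f C (hf.mono (F.le n)) hC
    have hBeq : B = (B ∩ {ω | X1 n ω = -1}) ∪ (B ∩ {ω | X1 n ω = 1}) := by
      ext ω
      simp only [Set.mem_union, Set.mem_inter_iff, Set.mem_setOf_eq]
      constructor
      · intro hω; rcases hBs ω hω with h | h <;> tauto
      · tauto
    have hd : Disjoint (B ∩ {ω | X1 n ω = -1}) (B ∩ {ω | X1 n ω = 1}) := by
      rw [Set.disjoint_left]; rintro ω ⟨-, h1⟩ ⟨-, h2⟩
      simp only [Set.mem_setOf_eq] at h1 h2; omega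
    have hL : B ∩ {ω | X1 (n+1) ω = 0} =
        ((B ∩ {ω | X1 n ω = -1}) ∩ {ω | X1 (n+1) ω = 0}) ∪
        ((B ∩ {ω | X1 n ω = 1}) ∩ {ω | X1 (n+1) ω = 0}) := by
      conv_lhs => rw [hBeq]
      rw [Set.union_inter_distrib_right]
    have hmB1 : MeasurableSet ((B ∩ {ω | X1 n ω = 1}) ∩ {ω | X1 (n+1) ω = 0}) :=
      ((F.le n B hB).inter (hmX1' n 1)).inter (hmX1' (n+1) 0)
    rw [hL, hunion _ _ hmB1 (hd.mono Set.inter_subset_left Set.inter_subset_left) f hfint]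
    rw [hhalf1 n (-1) (Or.inl rfl) _ (hB.inter (hmX1 n (-1)))
        (fun ω hω => hω.2) f C hf hC,
      hhalf1 n 1 (Or.inr rfl) _ (hB.inter (hmX1 n 1)) (fun ω hω => hω.2) f C hf hC]
    have := hunion _ _ (F.le n _ (hB.inter (hmX1 n 1))) hd f hfint
    rw [← hBeq] at this
    rw [← mul_add, ← this]
  have hhalf2' : ∀ (n : ℕ) (B : Set Ω), MeasurableSet[F n] B →
      (∀ ω ∈ B, X2 n ω = -1 ∨ X2 n ω = 1) → ∀ (f : Ω → ℝ) (C : ℝ),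
      StronglyMeasurable[F n] f → (∀ ω, |f ω| ≤ C) →
      ∫ ω in B ∩ {ω | X2 (n+1) ω = 0}, f ω ∂μ = (1/2) * ∫ ω in B, f ω ∂μ := by
    intro n B hB hBs f C hf hC
    have hfint : Integrable f μ := hintf f C (hf.mono (F.le n)) hC
    have hBeq : B = (B ∩ {ω | X2 n ω = -1}) ∪ (B ∩ {ω | X2 n ω = 1}) := by
      ext ω
      simp only [Set.mem_union, Set.mem_inter_iff, Set.mem_setOf_eq]
      constructor
      · intro hω; rcases hBs ω hω with h | h <;> tauto
      · tauto
    have hd : Disjoint (B ∩ {ω | X2 n ω = -1}) (B ∩ {ω | X2 n ω = 1}) := by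
      rw [Set.disjoint_left]; rintro ω ⟨-, h1⟩ ⟨-, h2⟩
      simp only [Set.mem_setOf_eq] at h1 h2; omega
    have hL : B ∩ {ω | X2 (n+1) ω = 0} =
        ((B ∩ {ω | X2 n ω = -1}) ∩ {ω | X2 (n+1) ω = 0}) ∪
        ((B ∩ {ω | X2 n ω = 1}) ∩ {ω | X2 (n+1) ω = 0}) := by
      conv_lhs => rw [hBeq]
      rw [Set.union_inter_distrib_right]
    have hmB1 : MeasurableSet ((B ∩ {ω | X2 n ω = 1}) ∩ {ω | X2 (n+1) ω = 0}) :=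
      ((F.le n B hB).inter (hmX2' n 1)).inter (hmX2' (n+1) 0)
    rw [hL, hunion _ _ hmB1 (hd.mono Set.inter_subset_left Set.inter_subset_left) f hfint]
    rw [hhalf2 n (-1) (Or.inl rfl) _ (hB.inter (hmX2 n (-1)))
        (fun ω hω => hω.2) f C hf hC,
      hhalf2 n 1 (Or.inr rfl) _ (hB.inter (hmX2 n 1)) (fun ω hω => hω.2) f C hf hC]
    have := hunion _ _ (F.le n _ (hB.inter (hmX2 n 1))) hd f hfint
    rw [← hBeq] at this
    rw [← mul_add, ← this]
  -- center walker moves left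
  have hcm1 : ∀ (n : ℕ) (B : Set Ω), MeasurableSet[F n] B → (∀ ω ∈ B, X1 n ω = 0) →
      ∫ ω in B ∩ {ω | X1 (n+1) ω = -1}, (1:ℝ) ∂μ
        = (1/(2*(a+b+n))) * ∫ ω in B, wl n ω ∂μ := by
    intro n B hB hBs
    have hBA : B ∩ {ω | X1 (n+1) ω = -1} = B ∩ {ω | X1 (n+1) ω = X1 n ω - 1} := by
      ext ω
      simp only [Set.mem_inter_iff, Set.mem_setOf_eq]
      constructor <;> rintro ⟨hBω, h⟩ <;> exact ⟨hBω, by have := hBs ω hBω; omega⟩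
    rw [hBA, step_integral μ F n _ (hmAdn1 n) _ (hcond1down n) B hB (fun _ => (1:ℝ))
      stronglyMeasurable_const 1 (fun ω => by norm_num)]
    have hpos : (0:ℝ) < a + b + n := by positivity
    have : ∫ ω in B, (1:ℝ) * ((1/2) * (if X1 n ω = 0 then wl n ω / (wl n ω + wr n ω)
        else if X1 n ω = 1 then 1 else 0)) ∂μ
        = ∫ ω in B, wl n ω * (1/(2*(a+b+n))) ∂μ := by
      refine setIntegral_congr_fun (F.le n B hB) fun ω hω => ?_
      rw [hBs ω hω, hsum n ω]
      simp only [if_pos rfl, one_mul, if_true]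
      field_simp
    rw [this, integral_mul_const, mul_comm]
  have hcm2 : ∀ (n : ℕ) (B : Set Ω), MeasurableSet[F n] B → (∀ ω ∈ B, X2 n ω = 0) →
      ∫ ω in B ∩ {ω | X2 (n+1) ω = -1}, (1:ℝ) ∂μ
        = (1/(2*(a+b+n))) * ∫ ω in B, wl n ω ∂μ := by
    intro n B hB hBs
    have hBA : B ∩ {ω | X2 (n+1) ω = -1} = B ∩ {ω | X2 (n+1) ω = X2 n ω - 1} := by
      ext ω
      simp only [Set.mem_inter_iff, Set.mem_setOf_eq]
      constructor <;> rintro ⟨hBω, h⟩ <;> exact ⟨hBω, by have := hBs ω hBω; omega⟩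
    rw [hBA, step_integral μ F n _ (hmAdn2 n) _ (hcond2down n) B hB (fun _ => (1:ℝ))
      stronglyMeasurable_const 1 (fun ω => by norm_num)]
    have hpos : (0:ℝ) < a + b + n := by positivity
    have : ∫ ω in B, (1:ℝ) * ((1/2) * (if X2 n ω = 0 then wl n ω / (wl n ω + wr n ω)
        else if X2 n ω = 1 then 1 else 0)) ∂μ
        = ∫ ω in B, wl n ω * (1/(2*(a+b+n))) ∂μ := by
      refine setIntegral_congr_fun (F.le n B hB) fun ω hω => ?_
      rw [hBs ω hω, hsum n ω]
      simp only [if_pos rfl, one_mul, if_true]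
      field_simp
    rw [this, integral_mul_const, mul_comm]
  -- on any F_(2l-1)-measurable set, meeting at time 2l has conditional probability 1/2
  have hretSplit : ∀ (n : ℕ), n % 2 = 1 → ∀ B : Set Ω, MeasurableSet[F n] B →
      ∀ (f : Ω → ℝ) (C : ℝ), StronglyMeasurable[F n] f → (∀ ω, |f ω| ≤ C) →
      ∫ ω in B ∩ {ω | X1 (n+1) ω = 0 ∧ X2 (n+1) ω = 0}, f ω ∂μ
        = (1/2) * ∫ ω in B, f ω ∂μ := by
    intro n hn2 B hB f C hf hC
    have hfint : Integrable f μ := hintf f C (hf.mono (F.le n)) hC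
    have hmB : MeasurableSet B := F.le n B hB
    have hmM : MeasurableSet {ω | X1 (n+1) ω = 0 ∧ X2 (n+1) ω = 0} := by
      have : {ω | X1 (n+1) ω = 0 ∧ X2 (n+1) ω = 0}
          = {ω | X1 (n+1) ω = 0} ∩ {ω | X2 (n+1) ω = 0} := by ext ω; simp [Set.mem_setOf_eq]
      rw [this]; exact (hmX1' (n+1) 0).inter (hmX2' (n+1) 0)
    rw [hsplitOdd n hn2 _ (hmB.inter hmM) f hfint]
    have he1 : (B ∩ {ω | X1 (n+1) ω = 0 ∧ X2 (n+1) ω = 0}) ∩ {ω | X2 n ω = 0}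
        = (B ∩ {ω | X2 n ω = 0}) ∩ {ω | X1 (n+1) ω = 0} := by
      ext ω
      simp only [Set.mem_inter_iff, Set.mem_setOf_eq]
      constructor
      · rintro ⟨⟨hBω, hM1, hM2⟩, h2⟩; exact ⟨⟨hBω, h2⟩, hM1⟩
      · rintro ⟨⟨hBω, h2⟩, h1⟩
        refine ⟨⟨hBω, h1, ?_⟩, h2⟩
        have hp := hpar n ω
        rcases hmv n ω with ⟨hfix, -⟩ | ⟨hfix, -⟩ <;> omega
    have he2 : (B ∩ {ω | X1 (n+1) ω = 0 ∧ X2 (n+1) ω = 0}) ∩ {ω | X1 n ω = 0}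
        = (B ∩ {ω | X1 n ω = 0}) ∩ {ω | X2 (n+1) ω = 0} := by
      ext ω
      simp only [Set.mem_inter_iff, Set.mem_setOf_eq]
      constructor
      · rintro ⟨⟨hBω, hM1, hM2⟩, h2⟩; exact ⟨⟨hBω, h2⟩, hM2⟩
      · rintro ⟨⟨hBω, h1⟩, h2⟩
        refine ⟨⟨hBω, ?_, h2⟩, h1⟩
        have hp := hpar n ω
        rcases hmv n ω with ⟨hfix, -⟩ | ⟨hfix, -⟩ <;> omega
    rw [he1, he2]
    rw [hhalf1' n _ (hB.inter (hmX2 n 0))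
      (fun ω hω => by
        have hp := hpar n ω; have q1 := hr1 n ω
        have h2 : X2 n ω = 0 := hω.2
        omega) f C hf hC]
    rw [hhalf2' n _ (hB.inter (hmX1 n 0))
      (fun ω hω => by
        have hp := hpar n ω; have q2 := hr2 n ω
        have h1 : X1 n ω = 0 := hω.2
        omega) f C hf hC]
    rw [← mul_add, ← hsplitOdd n hn2 B hmB f hfint]
  -- measurability of no-meeting events
  have hGm : ∀ (N nn : ℕ), N ≤ nn + 1 →
      MeasurableSet[F nn] {ω | ∀ k, 1 ≤ k → k < N → ¬(X1 k ω = 0 ∧ X2 k ω = 0)} := by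
    intro N nn hN
    have hset : {ω | ∀ k, 1 ≤ k → k < N → ¬(X1 k ω = 0 ∧ X2 k ω = 0)}
        = ⋂ k ∈ Set.Ico 1 N, ({ω | X1 k ω = 0} ∩ {ω | X2 k ω = 0})ᶜ := by
      ext ω
      simp only [Set.mem_setOf_eq, Set.mem_iInter, Set.mem_Ico, Set.mem_compl_iff,
        Set.mem_inter_iff]
      constructor
      · intro h k hk; exact fun hc => h k hk.1 hk.2 ⟨hc.1, hc.2⟩
      · intro h k h1 h2 hc; exact h k ⟨h1, h2⟩ ⟨hc.1, hc.2⟩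
    rw [hset]
    refine MeasurableSet.biInter (Set.to_countable _) fun k hk => ?_
    obtain ⟨hk1, hk2⟩ : 1 ≤ k ∧ k < N := by simpa [Set.mem_Ico] using hk
    exact F.mono (by omega : k ≤ nn) _ (((hmX1 k 0).inter (hmX2 k 0)).compl)
  -- recursion for the no-meeting events
  have hGsucc : ∀ n : ℕ, n % 2 = 1 →
      {ω | ∀ k, 1 ≤ k → k < n + 3 → ¬(X1 k ω = 0 ∧ X2 k ω = 0)}
        = {ω | ∀ k, 1 ≤ k → k < n + 1 → ¬(X1 k ω = 0 ∧ X2 k ω = 0)}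
          ∩ {ω | X1 (n+1) ω = 0 ∧ X2 (n+1) ω = 0}ᶜ := by
    intro n hn
    ext ω
    simp only [Set.mem_inter_iff, Set.mem_setOf_eq, Set.mem_compl_iff]
    constructor
    · intro h
      exact ⟨fun k h1 h2 => h k h1 (by omega), h (n+1) (by omega) (by omega)⟩
    · rintro ⟨h, hM⟩ k hk1 hk2
      by_cases hk : k < n + 1
      · exact h k hk1 hk
      · have hcase : k = n+1 ∨ k = n+2 := by omega
        rcases hcase with rfl | rfl
        · exact hM
        · rintro ⟨h1, h2⟩
          have hp := hpar (n+2) ω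
          omega
  -- characterisation of the first meeting time
  have hTau : ∀ l : ℕ, 1 ≤ l → ∀ ω,
      (sInf {k | 1 ≤ k ∧ X1 k ω = 0 ∧ X2 k ω = 0} = 2*l) ↔
      ((∀ k, 1 ≤ k → k < 2*l → ¬(X1 k ω = 0 ∧ X2 k ω = 0)) ∧
        (X1 (2*l) ω = 0 ∧ X2 (2*l) ω = 0)) := by
    intro l hl ω
    constructor
    · intro h
      have hne : {k | 1 ≤ k ∧ X1 k ω = 0 ∧ X2 k ω = 0}.Nonempty := by
        by_contra h'
        rw [Set.not_nonempty_iff_eq_empty] at h'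
        rw [h', Nat.sInf_empty] at h
        omega
      have hmem := Nat.sInf_mem hne
      rw [h] at hmem
      refine ⟨fun k hk1 hk2 hk3 => ?_, hmem.2⟩
      have := Nat.sInf_le (show k ∈ {k | 1 ≤ k ∧ X1 k ω = 0 ∧ X2 k ω = 0} from ⟨hk1, hk3⟩)
      omega
    · rintro ⟨hG, hM⟩
      have hmem : 2*l ∈ {k | 1 ≤ k ∧ X1 k ω = 0 ∧ X2 k ω = 0} := ⟨by omega, hM⟩
      have h1 := Nat.sInf_le hmem
      have h2 := Nat.sInf_mem (⟨_, hmem⟩ : {k | 1 ≤ k ∧ X1 k ω = 0 ∧ X2 k ω = 0}.Nonempty)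
      by_contra h'
      exact hG _ h2.1 (by omega) h2.2
  have key : ∀ l, 1 ≤ l →
      ((∫ ω in {ω | ∀ k, 1 ≤ k → k < 2*l → ¬(X1 k ω = 0 ∧ X2 k ω = 0)}
          ∩ {ω | X1 (2*l-1) ω = -1 ∨ X2 (2*l-1) ω = -1}, (1:ℝ) ∂μ)
        = (1/2)^(l-1) * (a/(a+b)) ∧
      (∫ ω in {ω | ∀ k, 1 ≤ k → k < 2*l → ¬(X1 k ω = 0 ∧ X2 k ω = 0)}, wl (2*l-1) ω ∂μ)
        = (a + b + ((2*l-1 : ℕ) : ℝ)) * ((1/2)^(l-1) * (a/(a+b)))) := by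
    intro l hl
    induction l, hl using Nat.le_induction with
    | base =>
      have hab : a + b ≠ 0 := by positivity
      simp only [show (2*1 : ℕ) = 2 from rfl, show (2*1-1 : ℕ) = 1 from rfl,
        show (1:ℕ)-1 = 0 from rfl, pow_zero, one_mul, Nat.cast_one]
      have hG1 : {ω | ∀ k, 1 ≤ k → k < 2 → ¬(X1 k ω = 0 ∧ X2 k ω = 0)} = Set.univ := by
        ext ω
        simp only [Set.mem_setOf_eq, Set.mem_univ, iff_true]
        intro k h1 h2 hc
        have hk : k = 1 := by omega
        subst hk
        have hp := hpar 1 ω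
        omega
      have hLsplit : {ω | X1 1 ω = -1 ∨ X2 1 ω = -1}
          = {ω | X1 1 ω = -1} ∪ {ω | X2 1 ω = -1} := by
        ext ω; simp [Set.mem_setOf_eq, Set.mem_union]
      have hd : Disjoint {ω | X1 1 ω = -1} {ω | X2 1 ω = -1} := by
        rw [Set.disjoint_left]
        intro ω h1 h2
        simp only [Set.mem_setOf_eq] at h1 h2
        have hp := hpar 1 ω
        omega
      have hw0 : ∫ ω in Set.univ, wl 0 ω ∂μ = a := by
        rw [Measure.restrict_univ]
        have : wl 0 = fun _ => a := hwl0
        rw [this]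
        simp [integral_const]
      have hs1 : ∫ ω in {ω | X1 1 ω = -1}, (1:ℝ) ∂μ = a / (2*(a+b)) := by
        have h := hcm1 0 Set.univ MeasurableSet.univ
          (fun ω _ => by rw [hX10])
        rw [Set.univ_inter] at h
        simp only [zero_add, Nat.cast_zero, add_zero] at h
        rw [h, hw0]
        ring
      have hs2 : ∫ ω in {ω | X2 1 ω = -1}, (1:ℝ) ∂μ = a / (2*(a+b)) := by
        have h := hcm2 0 Set.univ MeasurableSet.univ
          (fun ω _ => by rw [hX20])
        rw [Set.univ_inter] at h
        simp only [zero_add, Nat.cast_zero, add_zero] at h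
        rw [h, hw0]
        ring
      have hb1 : ∫ ω in {ω | X1 1 ω = -1 ∨ X2 1 ω = -1}, (1:ℝ) ∂μ = a/(a+b) := by
        rw [hLsplit, hunion _ _ (hmX2' 1 (-1)) hd _ hint1, hs1, hs2]
        field_simp
        ring
      constructor
      · rw [hG1, Set.univ_inter, hb1]
      · have hwl1 : ∀ ω, wl 1 ω
            = a + ({ω | X1 1 ω = -1 ∨ X2 1 ω = -1}).indicator (fun _ => (1:ℝ)) ω := by
          intro ω
          have h0 := hwl 0 ω
          rw [hX10, hX20, hwl0] at h0
          norm_num at h0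
          rw [h0, Set.indicator_apply]
          simp only [Set.mem_setOf_eq]
        have hmLv : MeasurableSet {ω | X1 1 ω = -1 ∨ X2 1 ω = -1} := by
          rw [hLsplit]; exact (hmX1' 1 (-1)).union (hmX2' 1 (-1))
        rw [hG1]
        rw [Measure.restrict_univ]
        have : ∫ ω, wl 1 ω ∂μ
            = ∫ ω, (a + ({ω | X1 1 ω = -1 ∨ X2 1 ω = -1}).indicator (fun _ => (1:ℝ)) ω) ∂μ :=
          integral_congr_ae (Filter.Eventually.of_forall hwl1)
        rw [this, integral_add (integrable_const a)
          ((integrable_const (1:ℝ)).indicator hmLv)]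
        rw [integral_indicator hmLv, hb1]
        simp only [integral_const, Measure.real, measure_univ, ENNReal.toReal_one, one_smul]
        field_simp
    | succ l hl ih =>
      obtain ⟨ihb, iha⟩ := ih
      obtain ⟨n, hn⟩ : ∃ n, n = 2*l-1 := ⟨_, rfl⟩
      have h2l : 2*l = n+1 := by omega
      have hnodd : n % 2 = 1 := by omega
      simp only [h2l, Nat.add_sub_cancel] at ihb iha
      simp only [show 2*(l+1) = n+3 from by omega, show (n+3)-1 = n+2 from rfl,
        show (l+1)-1 = l from by omega]
      rw [hGsucc n hnodd]
      -- abbreviations (all explicit)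
      have hSne : (a + b + (n:ℝ)) ≠ 0 := by positivity
      have habne : a + b ≠ 0 := by positivity
      have hpow : ((1:ℝ)/2)^l = (1/2)^(l-1) * (1/2) := by
        rw [← pow_succ]
        congr 1
        omega
      have hmGs : MeasurableSet[F n] {ω | ∀ k, 1 ≤ k → k < n+1 → ¬(X1 k ω = 0 ∧ X2 k ω = 0)} :=
        hGm (n+1) n (le_refl _)
      have hmGs' : MeasurableSet {ω | ∀ k, 1 ≤ k → k < n+1 → ¬(X1 k ω = 0 ∧ X2 k ω = 0)} :=
        F.le n _ hmGs
      have hmMsF : MeasurableSet[F (n+1)] {ω | X1 (n+1) ω = 0 ∧ X2 (n+1) ω = 0} := by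
        have : {ω | X1 (n+1) ω = 0 ∧ X2 (n+1) ω = 0}
            = {ω | X1 (n+1) ω = 0} ∩ {ω | X2 (n+1) ω = 0} := by
          ext ω; simp [Set.mem_setOf_eq]
        rw [this]; exact (hmX1 (n+1) 0).inter (hmX2 (n+1) 0)
      have hmMs' : MeasurableSet {ω | X1 (n+1) ω = 0 ∧ X2 (n+1) ω = 0} := F.le (n+1) _ hmMsF
      have hmGpF : MeasurableSet[F (n+1)]
          ({ω | ∀ k, 1 ≤ k → k < n+1 → ¬(X1 k ω = 0 ∧ X2 k ω = 0)}
            ∩ {ω | X1 (n+1) ω = 0 ∧ X2 (n+1) ω = 0}ᶜ) :=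
        (F.mono (by omega) _ hmGs).inter hmMsF.compl
      have hmGp' : MeasurableSet
          ({ω | ∀ k, 1 ≤ k → k < n+1 → ¬(X1 k ω = 0 ∧ X2 k ω = 0)}
            ∩ {ω | X1 (n+1) ω = 0 ∧ X2 (n+1) ω = 0}ᶜ) := F.le (n+1) _ hmGpF
      -- complement integral helper
      have hcompl : ∀ S : Set Ω, MeasurableSet S → ∀ f : Ω → ℝ, Integrable f μ →
          ∫ ω in S ∩ {ω | X1 (n+1) ω = 0 ∧ X2 (n+1) ω = 0}ᶜ, f ω ∂μ
            = (∫ ω in S, f ω ∂μ)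
              - ∫ ω in S ∩ {ω | X1 (n+1) ω = 0 ∧ X2 (n+1) ω = 0}, f ω ∂μ := by
        intro S hS f hf
        have hu := hunion (S ∩ {ω | X1 (n+1) ω = 0 ∧ X2 (n+1) ω = 0})
          (S ∩ {ω | X1 (n+1) ω = 0 ∧ X2 (n+1) ω = 0}ᶜ)
          (hS.inter hmMs'.compl)
          (disjoint_compl_right.mono Set.inter_subset_right Set.inter_subset_right) f hf
        rw [Set.inter_union_compl] at hu
        linarith
      -- splitting the inductive hypotheses
      have hb12 : (∫ ω in {ω | ∀ k, 1 ≤ k → k < n+1 → ¬(X1 k ω = 0 ∧ X2 k ω = 0)}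
            ∩ {ω | X1 n ω = -1}, (1:ℝ) ∂μ)
          + (∫ ω in {ω | ∀ k, 1 ≤ k → k < n+1 → ¬(X1 k ω = 0 ∧ X2 k ω = 0)}
            ∩ {ω | X2 n ω = -1}, (1:ℝ) ∂μ)
          = (1/2)^(l-1) * (a/(a+b)) := by
        rw [← hunion _ _ (hmGs'.inter (hmX2' n (-1)))
          (by
            rw [Set.disjoint_left]
            rintro ω ⟨-, h1⟩ ⟨-, h2⟩
            simp only [Set.mem_setOf_eq] at h1 h2
            have hp := hpar n ω
            omega) _ hint1]
        rw [← Set.inter_union_distrib_left]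
        rw [show {ω | X1 n ω = -1} ∪ {ω | X2 n ω = -1}
            = {ω | X1 n ω = -1 ∨ X2 n ω = -1} from by ext ω; simp [Set.mem_setOf_eq]]
        exact ihb
      have hc12 : (∫ ω in {ω | ∀ k, 1 ≤ k → k < n+1 → ¬(X1 k ω = 0 ∧ X2 k ω = 0)}
            ∩ {ω | X2 n ω = 0}, wl n ω ∂μ)
          + (∫ ω in {ω | ∀ k, 1 ≤ k → k < n+1 → ¬(X1 k ω = 0 ∧ X2 k ω = 0)}
            ∩ {ω | X1 n ω = 0}, wl n ω ∂μ)
          = (a + b + (n:ℝ)) * ((1/2)^(l-1) * (a/(a+b))) := by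
        rw [← hsplitOdd n hnodd _ hmGs' (wl n) (hintwl n), iha]
      -- the two one-step events at time n+1
      have hE1 : ({ω | ∀ k, 1 ≤ k → k < n+1 → ¬(X1 k ω = 0 ∧ X2 k ω = 0)}
            ∩ {ω | X1 (n+1) ω = 0 ∧ X2 (n+1) ω = 0}ᶜ) ∩ {ω | X1 (n+1) ω = -1}
          = (({ω | ∀ k, 1 ≤ k → k < n+1 → ¬(X1 k ω = 0 ∧ X2 k ω = 0)}
              ∩ {ω | X1 n ω = -1}) ∩ {ω | X1 (n+1) ω = 0 ∧ X2 (n+1) ω = 0}ᶜ)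
            ∪ (({ω | ∀ k, 1 ≤ k → k < n+1 → ¬(X1 k ω = 0 ∧ X2 k ω = 0)}
              ∩ {ω | X1 n ω = 0}) ∩ {ω | X1 (n+1) ω = -1}) := by
        ext ω
        simp only [Set.mem_union, Set.mem_inter_iff, Set.mem_compl_iff, Set.mem_setOf_eq]
        have hp := hpar n ω
        have q1 := hr1 n ω; have q1' := hr1 (n+1) ω
        have q2 := hr2 n ω; have q2' := hr2 (n+1) ω
        constructor
        · rintro ⟨⟨hG, hMc⟩, hx⟩
          by_cases h0 : X1 n ω = 0
          · right; exact ⟨⟨hG, h0⟩, hx⟩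
          · left
            refine ⟨⟨hG, ?_⟩, hMc⟩
            rcases hmv n ω with ⟨hf, h | h⟩ | ⟨hf, h | h⟩ <;> omega
        · rintro (⟨⟨hG, hx1⟩, hMc⟩ | ⟨⟨hG, h0⟩, hx1⟩)
          · refine ⟨⟨hG, hMc⟩, ?_⟩
            rcases hmv n ω with ⟨hf, h | h⟩ | ⟨hf, h | h⟩ <;> omega
          · exact ⟨⟨hG, fun hM => by omega⟩, hx1⟩
      have hE2 : ({ω | ∀ k, 1 ≤ k → k < n+1 → ¬(X1 k ω = 0 ∧ X2 k ω = 0)}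
            ∩ {ω | X1 (n+1) ω = 0 ∧ X2 (n+1) ω = 0}ᶜ) ∩ {ω | X2 (n+1) ω = -1}
          = (({ω | ∀ k, 1 ≤ k → k < n+1 → ¬(X1 k ω = 0 ∧ X2 k ω = 0)}
              ∩ {ω | X2 n ω = -1}) ∩ {ω | X1 (n+1) ω = 0 ∧ X2 (n+1) ω = 0}ᶜ)
            ∪ (({ω | ∀ k, 1 ≤ k → k < n+1 → ¬(X1 k ω = 0 ∧ X2 k ω = 0)}
              ∩ {ω | X2 n ω = 0}) ∩ {ω | X2 (n+1) ω = -1}) := by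
        ext ω
        simp only [Set.mem_union, Set.mem_inter_iff, Set.mem_compl_iff, Set.mem_setOf_eq]
        have hp := hpar n ω
        have q1 := hr1 n ω; have q1' := hr1 (n+1) ω
        have q2 := hr2 n ω; have q2' := hr2 (n+1) ω
        constructor
        · rintro ⟨⟨hG, hMc⟩, hx⟩
          by_cases h0 : X2 n ω = 0
          · right; exact ⟨⟨hG, h0⟩, hx⟩
          · left
            refine ⟨⟨hG, ?_⟩, hMc⟩
            rcases hmv n ω with ⟨hf, h | h⟩ | ⟨hf, h | h⟩ <;> omega
        · rintro (⟨⟨hG, hx1⟩, hMc⟩ | ⟨⟨hG, h0⟩, hx1⟩)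
          · refine ⟨⟨hG, hMc⟩, ?_⟩
            rcases hmv n ω with ⟨hf, h | h⟩ | ⟨hf, h | h⟩ <;> omega
          · exact ⟨⟨hG, fun hM => by omega⟩, hx1⟩
      have hm1 : ∫ ω in ({ω | ∀ k, 1 ≤ k → k < n+1 → ¬(X1 k ω = 0 ∧ X2 k ω = 0)}
            ∩ {ω | X1 (n+1) ω = 0 ∧ X2 (n+1) ω = 0}ᶜ) ∩ {ω | X1 (n+1) ω = -1}, (1:ℝ) ∂μ
          = (1/2) * (∫ ω in {ω | ∀ k, 1 ≤ k → k < n+1 → ¬(X1 k ω = 0 ∧ X2 k ω = 0)}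
              ∩ {ω | X1 n ω = -1}, (1:ℝ) ∂μ)
            + (1/(2*(a+b+(n:ℝ)))) * ∫ ω in {ω | ∀ k, 1 ≤ k → k < n+1 → ¬(X1 k ω = 0 ∧ X2 k ω = 0)}
              ∩ {ω | X1 n ω = 0}, wl n ω ∂μ := by
        rw [hE1, hunion _ _ ((hmGs'.inter (hmX1' n 0)).inter (hmX1' (n+1) (-1)))
          (by
            rw [Set.disjoint_left]
            rintro ω ⟨⟨-, h1⟩, -⟩ ⟨⟨-, h2⟩, -⟩
            simp only [Set.mem_setOf_eq] at h1 h2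
            omega) _ hint1]
        rw [hcompl _ (hmGs'.inter (hmX1' n (-1))) _ hint1,
          hretSplit n hnodd _ (hmGs.inter (hmX1 n (-1))) _ 1 stronglyMeasurable_const
            (fun ω => by norm_num),
          hcm1 n _ (hmGs.inter (hmX1 n 0)) (fun ω hω => hω.2)]
        ring
      have hm2 : ∫ ω in ({ω | ∀ k, 1 ≤ k → k < n+1 → ¬(X1 k ω = 0 ∧ X2 k ω = 0)}
            ∩ {ω | X1 (n+1) ω = 0 ∧ X2 (n+1) ω = 0}ᶜ) ∩ {ω | X2 (n+1) ω = -1}, (1:ℝ) ∂μ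
          = (1/2) * (∫ ω in {ω | ∀ k, 1 ≤ k → k < n+1 → ¬(X1 k ω = 0 ∧ X2 k ω = 0)}
              ∩ {ω | X2 n ω = -1}, (1:ℝ) ∂μ)
            + (1/(2*(a+b+(n:ℝ)))) * ∫ ω in {ω | ∀ k, 1 ≤ k → k < n+1 → ¬(X1 k ω = 0 ∧ X2 k ω = 0)}
              ∩ {ω | X2 n ω = 0}, wl n ω ∂μ := by
        rw [hE2, hunion _ _ ((hmGs'.inter (hmX2' n 0)).inter (hmX2' (n+1) (-1)))
          (by
            rw [Set.disjoint_left]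
            rintro ω ⟨⟨-, h1⟩, -⟩ ⟨⟨-, h2⟩, -⟩
            simp only [Set.mem_setOf_eq] at h1 h2
            omega) _ hint1]
        rw [hcompl _ (hmGs'.inter (hmX2' n (-1))) _ hint1,
          hretSplit n hnodd _ (hmGs.inter (hmX2 n (-1))) _ 1 stronglyMeasurable_const
            (fun ω => by norm_num),
          hcm2 n _ (hmGs.inter (hmX2 n 0)) (fun ω hω => hω.2)]
        ring
      have hF1 : ({ω | ∀ k, 1 ≤ k → k < n+1 → ¬(X1 k ω = 0 ∧ X2 k ω = 0)}
            ∩ {ω | X1 (n+1) ω = 0 ∧ X2 (n+1) ω = 0}ᶜ) ∩ {ω | X1 (n+2) ω = -1}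
          = (({ω | ∀ k, 1 ≤ k → k < n+1 → ¬(X1 k ω = 0 ∧ X2 k ω = 0)}
              ∩ {ω | X1 (n+1) ω = 0 ∧ X2 (n+1) ω = 0}ᶜ) ∩ {ω | X1 (n+1) ω = -1})
            ∩ {ω | X2 (n+2) ω = 0} := by
        ext ω
        simp only [Set.mem_inter_iff, Set.mem_compl_iff, Set.mem_setOf_eq]
        have hp1 := hpar (n+1) ω
        have q1 := hr1 (n+1) ω; have q1' := hr1 (n+2) ω
        have q2 := hr2 (n+1) ω; have q2' := hr2 (n+2) ω
        constructor
        · rintro ⟨⟨hG, hMc⟩, hx⟩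
          have key : X1 (n+1) ω = -1 ∧ X2 (n+2) ω = 0 := by
            have hmv2 : (X2 (n+2) ω = X2 (n+1) ω ∧ (X1 (n+2) ω = X1 (n+1) ω + 1 ∨ X1 (n+2) ω = X1 (n+1) ω - 1)) ∨
              (X1 (n+2) ω = X1 (n+1) ω ∧ (X2 (n+2) ω = X2 (n+1) ω + 1 ∨ X2 (n+2) ω = X2 (n+1) ω - 1)) := hmv (n+1) ω
            rcases hmv2 with ⟨hf, h | h⟩ | ⟨hf, h | h⟩ <;> omega
          exact ⟨⟨⟨hG, hMc⟩, key.1⟩, key.2⟩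
        · rintro ⟨⟨⟨hG, hMc⟩, h1⟩, h2⟩
          refine ⟨⟨hG, hMc⟩, ?_⟩
          have hmv2 : (X2 (n+2) ω = X2 (n+1) ω ∧ (X1 (n+2) ω = X1 (n+1) ω + 1 ∨ X1 (n+2) ω = X1 (n+1) ω - 1)) ∨
              (X1 (n+2) ω = X1 (n+1) ω ∧ (X2 (n+2) ω = X2 (n+1) ω + 1 ∨ X2 (n+2) ω = X2 (n+1) ω - 1)) := hmv (n+1) ω
          rcases hmv2 with ⟨hf, h | h⟩ | ⟨hf, h | h⟩ <;> omega
      have hF2 : ({ω | ∀ k, 1 ≤ k → k < n+1 → ¬(X1 k ω = 0 ∧ X2 k ω = 0)}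
            ∩ {ω | X1 (n+1) ω = 0 ∧ X2 (n+1) ω = 0}ᶜ) ∩ {ω | X2 (n+2) ω = -1}
          = (({ω | ∀ k, 1 ≤ k → k < n+1 → ¬(X1 k ω = 0 ∧ X2 k ω = 0)}
              ∩ {ω | X1 (n+1) ω = 0 ∧ X2 (n+1) ω = 0}ᶜ) ∩ {ω | X2 (n+1) ω = -1})
            ∩ {ω | X1 (n+2) ω = 0} := by
        ext ω
        simp only [Set.mem_inter_iff, Set.mem_compl_iff, Set.mem_setOf_eq]
        have hp1 := hpar (n+1) ω
        have q1 := hr1 (n+1) ω; have q1' := hr1 (n+2) ω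
        have q2 := hr2 (n+1) ω; have q2' := hr2 (n+2) ω
        constructor
        · rintro ⟨⟨hG, hMc⟩, hx⟩
          have key : X2 (n+1) ω = -1 ∧ X1 (n+2) ω = 0 := by
            have hmv2 : (X2 (n+2) ω = X2 (n+1) ω ∧ (X1 (n+2) ω = X1 (n+1) ω + 1 ∨ X1 (n+2) ω = X1 (n+1) ω - 1)) ∨
              (X1 (n+2) ω = X1 (n+1) ω ∧ (X2 (n+2) ω = X2 (n+1) ω + 1 ∨ X2 (n+2) ω = X2 (n+1) ω - 1)) := hmv (n+1) ω
            rcases hmv2 with ⟨hf, h | h⟩ | ⟨hf, h | h⟩ <;> omega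
          exact ⟨⟨⟨hG, hMc⟩, key.1⟩, key.2⟩
        · rintro ⟨⟨⟨hG, hMc⟩, h1⟩, h2⟩
          refine ⟨⟨hG, hMc⟩, ?_⟩
          have hmv2 : (X2 (n+2) ω = X2 (n+1) ω ∧ (X1 (n+2) ω = X1 (n+1) ω + 1 ∨ X1 (n+2) ω = X1 (n+1) ω - 1)) ∨
              (X1 (n+2) ω = X1 (n+1) ω ∧ (X2 (n+2) ω = X2 (n+1) ω + 1 ∨ X2 (n+2) ω = X2 (n+1) ω - 1)) := hmv (n+1) ω
          rcases hmv2 with ⟨hf, h | h⟩ | ⟨hf, h | h⟩ <;> omega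
      have hq1 : ∫ ω in ({ω | ∀ k, 1 ≤ k → k < n+1 → ¬(X1 k ω = 0 ∧ X2 k ω = 0)}
            ∩ {ω | X1 (n+1) ω = 0 ∧ X2 (n+1) ω = 0}ᶜ) ∩ {ω | X1 (n+2) ω = -1}, (1:ℝ) ∂μ
          = (1/2) * ∫ ω in ({ω | ∀ k, 1 ≤ k → k < n+1 → ¬(X1 k ω = 0 ∧ X2 k ω = 0)}
            ∩ {ω | X1 (n+1) ω = 0 ∧ X2 (n+1) ω = 0}ᶜ) ∩ {ω | X1 (n+1) ω = -1}, (1:ℝ) ∂μ := by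
        rw [hF1]
        refine hhalf2' (n+1) _ (hmGpF.inter (hmX1 (n+1) (-1))) ?_ 1 1
          stronglyMeasurable_const (fun ω => by norm_num)
        rintro ω ⟨⟨hG, hMc⟩, h1⟩
        simp only [Set.mem_setOf_eq] at h1
        simp only [Set.mem_compl_iff, Set.mem_setOf_eq] at hMc
        have hp1 := hpar (n+1) ω
        have q2 := hr2 (n+1) ω
        omega
      have hq2 : ∫ ω in ({ω | ∀ k, 1 ≤ k → k < n+1 → ¬(X1 k ω = 0 ∧ X2 k ω = 0)}
            ∩ {ω | X1 (n+1) ω = 0 ∧ X2 (n+1) ω = 0}ᶜ) ∩ {ω | X2 (n+2) ω = -1}, (1:ℝ) ∂μ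
          = (1/2) * ∫ ω in ({ω | ∀ k, 1 ≤ k → k < n+1 → ¬(X1 k ω = 0 ∧ X2 k ω = 0)}
            ∩ {ω | X1 (n+1) ω = 0 ∧ X2 (n+1) ω = 0}ᶜ) ∩ {ω | X2 (n+1) ω = -1}, (1:ℝ) ∂μ := by
        rw [hF2]
        refine hhalf1' (n+1) _ (hmGpF.inter (hmX2 (n+1) (-1))) ?_ 1 1
          stronglyMeasurable_const (fun ω => by norm_num)
        rintro ω ⟨⟨hG, hMc⟩, h1⟩
        simp only [Set.mem_setOf_eq] at h1
        simp only [Set.mem_compl_iff, Set.mem_setOf_eq] at hMc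
        have hp1 := hpar (n+1) ω
        have q1 := hr1 (n+1) ω
        omega
      constructor
      · -- the β recursion
        rw [show {ω | X1 (n+2) ω = -1 ∨ X2 (n+2) ω = -1}
            = {ω | X1 (n+2) ω = -1} ∪ {ω | X2 (n+2) ω = -1} from by
              ext ω; simp [Set.mem_setOf_eq]]
        rw [Set.inter_union_distrib_left,
          hunion _ _ (hmGp'.inter (hmX2' (n+2) (-1)))
            (by
              rw [Set.disjoint_left]
              rintro ω ⟨-, h1⟩ ⟨-, h2⟩
              simp only [Set.mem_setOf_eq] at h1 h2
              have hp := hpar (n+2) ω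
              omega) _ hint1]
        rw [hq1, hq2, hm1, hm2]
        set r1 := ∫ ω in {ω | ∀ k, 1 ≤ k → k < n+1 → ¬(X1 k ω = 0 ∧ X2 k ω = 0)}
          ∩ {ω | X1 n ω = -1}, (1:ℝ) ∂μ with hr1d
        set r2 := ∫ ω in {ω | ∀ k, 1 ≤ k → k < n+1 → ¬(X1 k ω = 0 ∧ X2 k ω = 0)}
          ∩ {ω | X2 n ω = -1}, (1:ℝ) ∂μ with hr2d
        set s1 := ∫ ω in {ω | ∀ k, 1 ≤ k → k < n+1 → ¬(X1 k ω = 0 ∧ X2 k ω = 0)}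
          ∩ {ω | X1 n ω = 0}, wl n ω ∂μ with hs1d
        set s2 := ∫ ω in {ω | ∀ k, 1 ≤ k → k < n+1 → ¬(X1 k ω = 0 ∧ X2 k ω = 0)}
          ∩ {ω | X2 n ω = 0}, wl n ω ∂μ with hs2d
        calc (1/2) * ((1/2) * r1 + (1/(2*(a+b+(n:ℝ)))) * s1)
              + (1/2) * ((1/2) * r2 + (1/(2*(a+b+(n:ℝ)))) * s2)
            = (1/4)*(r1+r2) + (1/(2*(a+b+(n:ℝ))))*(s2+s1)*(1/2) := by ring
          _ = (1/2)^l * (a/(a+b)) := by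
              have hc12' : (1/(2*(a+b+(n:ℝ))))*(s2+s1)*(1/2)
                  = (1/4)*((1/2)^(l-1)*(a/(a+b))) := by
                rw [hc12]
                field_simp
                ring
              rw [hb12, hc12', hpow]
              ring
      · -- the α recursion
        have hmU1 : MeasurableSet ({ω | X1 (n+1) ω = -1} ∩ {ω | X1 (n+2) ω = 0}) :=
          (hmX1' (n+1) (-1)).inter (hmX1' (n+2) 0)
        have hmU2 : MeasurableSet ({ω | X2 (n+1) ω = -1} ∩ {ω | X2 (n+2) ω = 0}) :=
          (hmX2' (n+1) (-1)).inter (hmX2' (n+2) 0)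
        have hmV1 : MeasurableSet ({ω | X1 n ω = 0} ∩ {ω | X1 (n+1) ω = -1}) :=
          (hmX1' n 0).inter (hmX1' (n+1) (-1))
        have hmV2 : MeasurableSet ({ω | X2 n ω = 0} ∩ {ω | X2 (n+1) ω = -1}) :=
          (hmX2' n 0).inter (hmX2' (n+1) (-1))
        have hstepA : Set.EqOn (wl (n+2))
            (fun ω => wl (n+1) ω + (({ω | X1 (n+1) ω = -1} ∩ {ω | X1 (n+2) ω = 0})
              ∪ ({ω | X2 (n+1) ω = -1} ∩ {ω | X2 (n+2) ω = 0})).indicator (fun _ => (1:ℝ)) ω)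
            ({ω | ∀ k, 1 ≤ k → k < n+1 → ¬(X1 k ω = 0 ∧ X2 k ω = 0)}
              ∩ {ω | X1 (n+1) ω = 0 ∧ X2 (n+1) ω = 0}ᶜ) := by
          rintro ω ⟨hG, hMc⟩
          simp only [Set.mem_compl_iff, Set.mem_setOf_eq] at hMc
          dsimp only
          have hw : wl (n+2) ω = wl (n+1) ω +
              (if (X1 (n+1) ω = -1 ∧ X1 (n+2) ω = 0) ∨ (X1 (n+1) ω = 0 ∧ X1 (n+2) ω = -1) ∨
                  (X2 (n+1) ω = -1 ∧ X2 (n+2) ω = 0) ∨ (X2 (n+1) ω = 0 ∧ X2 (n+2) ω = -1)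
                then 1 else 0) := hwl (n+1) ω
          rw [hw, Set.indicator_apply]
          congr 1
          refine if_congr ?_ rfl rfl
          simp only [Set.mem_union, Set.mem_inter_iff, Set.mem_setOf_eq]
          have hp1 := hpar (n+1) ω
          have q1 := hr1 (n+1) ω; have q2 := hr2 (n+1) ω
          omega
        have hstepB : Set.EqOn (wl (n+1))
            (fun ω => wl n ω + (({ω | X1 n ω = 0} ∩ {ω | X1 (n+1) ω = -1})
              ∪ ({ω | X2 n ω = 0} ∩ {ω | X2 (n+1) ω = -1})).indicator (fun _ => (1:ℝ)) ω)
            ({ω | ∀ k, 1 ≤ k → k < n+1 → ¬(X1 k ω = 0 ∧ X2 k ω = 0)}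
              ∩ {ω | X1 (n+1) ω = 0 ∧ X2 (n+1) ω = 0}ᶜ) := by
          rintro ω ⟨hG, hMc⟩
          simp only [Set.mem_compl_iff, Set.mem_setOf_eq] at hMc
          dsimp only
          rw [hwl n ω, Set.indicator_apply]
          congr 1
          refine if_congr ?_ rfl rfl
          simp only [Set.mem_union, Set.mem_inter_iff, Set.mem_setOf_eq]
          have hp := hpar n ω
          have q1 := hr1 n ω; have q2 := hr2 n ω
          rcases hmv n ω with ⟨hf, h | h⟩ | ⟨hf, h | h⟩ <;> omega
        have hIA : ∫ ω in {ω | ∀ k, 1 ≤ k → k < n+1 → ¬(X1 k ω = 0 ∧ X2 k ω = 0)}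
              ∩ {ω | X1 (n+1) ω = 0 ∧ X2 (n+1) ω = 0}ᶜ, wl (n+2) ω ∂μ
            = (∫ ω in {ω | ∀ k, 1 ≤ k → k < n+1 → ¬(X1 k ω = 0 ∧ X2 k ω = 0)}
                ∩ {ω | X1 (n+1) ω = 0 ∧ X2 (n+1) ω = 0}ᶜ, wl (n+1) ω ∂μ)
              + ∫ ω in ({ω | ∀ k, 1 ≤ k → k < n+1 → ¬(X1 k ω = 0 ∧ X2 k ω = 0)}
                ∩ {ω | X1 (n+1) ω = 0 ∧ X2 (n+1) ω = 0}ᶜ)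
                ∩ (({ω | X1 (n+1) ω = -1} ∩ {ω | X1 (n+2) ω = 0})
                  ∪ ({ω | X2 (n+1) ω = -1} ∩ {ω | X2 (n+2) ω = 0})), (1:ℝ) ∂μ := by
          rw [setIntegral_congr_fun hmGp' hstepA,
            integral_add ((hintwl (n+1)).integrableOn)
              (((integrable_const (1:ℝ)).indicator (hmU1.union hmU2)).integrableOn),
            setIntegral_indicator (hmU1.union hmU2)]
        have hIB : ∫ ω in {ω | ∀ k, 1 ≤ k → k < n+1 → ¬(X1 k ω = 0 ∧ X2 k ω = 0)}
              ∩ {ω | X1 (n+1) ω = 0 ∧ X2 (n+1) ω = 0}ᶜ, wl (n+1) ω ∂μ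
            = (∫ ω in {ω | ∀ k, 1 ≤ k → k < n+1 → ¬(X1 k ω = 0 ∧ X2 k ω = 0)}
                ∩ {ω | X1 (n+1) ω = 0 ∧ X2 (n+1) ω = 0}ᶜ, wl n ω ∂μ)
              + ∫ ω in ({ω | ∀ k, 1 ≤ k → k < n+1 → ¬(X1 k ω = 0 ∧ X2 k ω = 0)}
                ∩ {ω | X1 (n+1) ω = 0 ∧ X2 (n+1) ω = 0}ᶜ)
                ∩ (({ω | X1 n ω = 0} ∩ {ω | X1 (n+1) ω = -1})
                  ∪ ({ω | X2 n ω = 0} ∩ {ω | X2 (n+1) ω = -1})), (1:ℝ) ∂μ := by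
          rw [setIntegral_congr_fun hmGp' hstepB,
            integral_add ((hintwl n).integrableOn)
              (((integrable_const (1:ℝ)).indicator (hmV1.union hmV2)).integrableOn),
            setIntegral_indicator (hmV1.union hmV2)]
        have hwn : ∫ ω in {ω | ∀ k, 1 ≤ k → k < n+1 → ¬(X1 k ω = 0 ∧ X2 k ω = 0)}
              ∩ {ω | X1 (n+1) ω = 0 ∧ X2 (n+1) ω = 0}ᶜ, wl n ω ∂μ
            = (1/2) * ((a+b+(n:ℝ)) * ((1/2)^(l-1)*(a/(a+b)))) := by
          rw [hcompl _ hmGs' _ (hintwl n),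
            hretSplit n hnodd _ hmGs _ (a+b+(n:ℝ)) (hadwl n).stronglyMeasurable (hwlub n), iha]
          ring
        have hA2 : ∫ ω in (({ω | ∀ k, 1 ≤ k → k < n+1 → ¬(X1 k ω = 0 ∧ X2 k ω = 0)}
              ∩ {ω | X1 (n+1) ω = 0 ∧ X2 (n+1) ω = 0}ᶜ) ∩ {ω | X1 (n+1) ω = -1})
              ∩ {ω | X1 (n+2) ω = 0}, (1:ℝ) ∂μ
            = (1/2) * ∫ ω in ({ω | ∀ k, 1 ≤ k → k < n+1 → ¬(X1 k ω = 0 ∧ X2 k ω = 0)}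
              ∩ {ω | X1 (n+1) ω = 0 ∧ X2 (n+1) ω = 0}ᶜ) ∩ {ω | X1 (n+1) ω = -1}, (1:ℝ) ∂μ :=
          hhalf1' (n+1) _ (hmGpF.inter (hmX1 (n+1) (-1))) (fun ω hω => Or.inl hω.2)
            1 1 stronglyMeasurable_const (fun ω => by norm_num)
        have hA3 : ∫ ω in (({ω | ∀ k, 1 ≤ k → k < n+1 → ¬(X1 k ω = 0 ∧ X2 k ω = 0)}
              ∩ {ω | X1 (n+1) ω = 0 ∧ X2 (n+1) ω = 0}ᶜ) ∩ {ω | X2 (n+1) ω = -1})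
              ∩ {ω | X2 (n+2) ω = 0}, (1:ℝ) ∂μ
            = (1/2) * ∫ ω in ({ω | ∀ k, 1 ≤ k → k < n+1 → ¬(X1 k ω = 0 ∧ X2 k ω = 0)}
              ∩ {ω | X1 (n+1) ω = 0 ∧ X2 (n+1) ω = 0}ᶜ) ∩ {ω | X2 (n+1) ω = -1}, (1:ℝ) ∂μ :=
          hhalf2' (n+1) _ (hmGpF.inter (hmX2 (n+1) (-1))) (fun ω hω => Or.inl hω.2)
            1 1 stronglyMeasurable_const (fun ω => by norm_num)
        have hUu : ∫ ω in ({ω | ∀ k, 1 ≤ k → k < n+1 → ¬(X1 k ω = 0 ∧ X2 k ω = 0)}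
                ∩ {ω | X1 (n+1) ω = 0 ∧ X2 (n+1) ω = 0}ᶜ)
                ∩ (({ω | X1 (n+1) ω = -1} ∩ {ω | X1 (n+2) ω = 0})
                  ∪ ({ω | X2 (n+1) ω = -1} ∩ {ω | X2 (n+2) ω = 0})), (1:ℝ) ∂μ
            = (1/2) * (∫ ω in ({ω | ∀ k, 1 ≤ k → k < n+1 → ¬(X1 k ω = 0 ∧ X2 k ω = 0)}
                ∩ {ω | X1 (n+1) ω = 0 ∧ X2 (n+1) ω = 0}ᶜ) ∩ {ω | X1 (n+1) ω = -1}, (1:ℝ) ∂μ)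
              + (1/2) * ∫ ω in ({ω | ∀ k, 1 ≤ k → k < n+1 → ¬(X1 k ω = 0 ∧ X2 k ω = 0)}
                ∩ {ω | X1 (n+1) ω = 0 ∧ X2 (n+1) ω = 0}ᶜ) ∩ {ω | X2 (n+1) ω = -1}, (1:ℝ) ∂μ := by
          rw [Set.inter_union_distrib_left,
            hunion _ _ (hmGp'.inter hmU2)
              (by
                rw [Set.disjoint_left]
                rintro ω ⟨-, h1, h2⟩ ⟨-, h3, h4⟩
                simp only [Set.mem_setOf_eq] at h1 h2 h3 h4
                have hmv2 : (X2 (n+2) ω = X2 (n+1) ω ∧ (X1 (n+2) ω = X1 (n+1) ω + 1 ∨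
                    X1 (n+2) ω = X1 (n+1) ω - 1)) ∨ (X1 (n+2) ω = X1 (n+1) ω ∧
                    (X2 (n+2) ω = X2 (n+1) ω + 1 ∨ X2 (n+2) ω = X2 (n+1) ω - 1)) := hmv (n+1) ω
                rcases hmv2 with ⟨hf, h | h⟩ | ⟨hf, h | h⟩ <;> omega) _ hint1,
            show ({ω | ∀ k, 1 ≤ k → k < n+1 → ¬(X1 k ω = 0 ∧ X2 k ω = 0)}
                ∩ {ω | X1 (n+1) ω = 0 ∧ X2 (n+1) ω = 0}ᶜ)
                ∩ ({ω | X1 (n+1) ω = -1} ∩ {ω | X1 (n+2) ω = 0})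
              = (({ω | ∀ k, 1 ≤ k → k < n+1 → ¬(X1 k ω = 0 ∧ X2 k ω = 0)}
                ∩ {ω | X1 (n+1) ω = 0 ∧ X2 (n+1) ω = 0}ᶜ) ∩ {ω | X1 (n+1) ω = -1})
                ∩ {ω | X1 (n+2) ω = 0} from (Set.inter_assoc _ _ _).symm,
            show ({ω | ∀ k, 1 ≤ k → k < n+1 → ¬(X1 k ω = 0 ∧ X2 k ω = 0)}
                ∩ {ω | X1 (n+1) ω = 0 ∧ X2 (n+1) ω = 0}ᶜ)
                ∩ ({ω | X2 (n+1) ω = -1} ∩ {ω | X2 (n+2) ω = 0})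
              = (({ω | ∀ k, 1 ≤ k → k < n+1 → ¬(X1 k ω = 0 ∧ X2 k ω = 0)}
                ∩ {ω | X1 (n+1) ω = 0 ∧ X2 (n+1) ω = 0}ᶜ) ∩ {ω | X2 (n+1) ω = -1})
                ∩ {ω | X2 (n+2) ω = 0} from (Set.inter_assoc _ _ _).symm,
            hA2, hA3]
        have hVu : ∫ ω in ({ω | ∀ k, 1 ≤ k → k < n+1 → ¬(X1 k ω = 0 ∧ X2 k ω = 0)}
                ∩ {ω | X1 (n+1) ω = 0 ∧ X2 (n+1) ω = 0}ᶜ)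
                ∩ (({ω | X1 n ω = 0} ∩ {ω | X1 (n+1) ω = -1})
                  ∪ ({ω | X2 n ω = 0} ∩ {ω | X2 (n+1) ω = -1})), (1:ℝ) ∂μ
            = (1/(2*(a+b+(n:ℝ)))) * (∫ ω in {ω | ∀ k, 1 ≤ k → k < n+1 →
                  ¬(X1 k ω = 0 ∧ X2 k ω = 0)} ∩ {ω | X1 n ω = 0}, wl n ω ∂μ)
              + (1/(2*(a+b+(n:ℝ)))) * ∫ ω in {ω | ∀ k, 1 ≤ k → k < n+1 →
                  ¬(X1 k ω = 0 ∧ X2 k ω = 0)} ∩ {ω | X2 n ω = 0}, wl n ω ∂μ := by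
          have hV1eq : ({ω | ∀ k, 1 ≤ k → k < n+1 → ¬(X1 k ω = 0 ∧ X2 k ω = 0)}
                ∩ {ω | X1 (n+1) ω = 0 ∧ X2 (n+1) ω = 0}ᶜ)
                ∩ ({ω | X1 n ω = 0} ∩ {ω | X1 (n+1) ω = -1})
              = ({ω | ∀ k, 1 ≤ k → k < n+1 → ¬(X1 k ω = 0 ∧ X2 k ω = 0)}
                ∩ {ω | X1 n ω = 0}) ∩ {ω | X1 (n+1) ω = -1} := by
            ext ω
            simp only [Set.mem_inter_iff, Set.mem_compl_iff, Set.mem_setOf_eq]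
            constructor
            · rintro ⟨⟨hG, hMc⟩, h0, h1⟩; exact ⟨⟨hG, h0⟩, h1⟩
            · rintro ⟨⟨hG, h0⟩, h1⟩; exact ⟨⟨hG, by omega⟩, h0, h1⟩
          have hV2eq : ({ω | ∀ k, 1 ≤ k → k < n+1 → ¬(X1 k ω = 0 ∧ X2 k ω = 0)}
                ∩ {ω | X1 (n+1) ω = 0 ∧ X2 (n+1) ω = 0}ᶜ)
                ∩ ({ω | X2 n ω = 0} ∩ {ω | X2 (n+1) ω = -1})
              = ({ω | ∀ k, 1 ≤ k → k < n+1 → ¬(X1 k ω = 0 ∧ X2 k ω = 0)}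
                ∩ {ω | X2 n ω = 0}) ∩ {ω | X2 (n+1) ω = -1} := by
            ext ω
            simp only [Set.mem_inter_iff, Set.mem_compl_iff, Set.mem_setOf_eq]
            constructor
            · rintro ⟨⟨hG, hMc⟩, h0, h1⟩; exact ⟨⟨hG, h0⟩, h1⟩
            · rintro ⟨⟨hG, h0⟩, h1⟩; exact ⟨⟨hG, by omega⟩, h0, h1⟩
          rw [Set.inter_union_distrib_left,
            hunion _ _ (hmGp'.inter hmV2)
              (by
                rw [Set.disjoint_left]
                rintro ω ⟨-, h1, h2⟩ ⟨-, h3, h4⟩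
                simp only [Set.mem_setOf_eq] at h1 h2 h3 h4
                have hp := hpar n ω
                omega) _ hint1,
            hV1eq, hV2eq,
            hcm1 n _ (hmGs.inter (hmX1 n 0)) (fun ω hω => hω.2),
            hcm2 n _ (hmGs.inter (hmX2 n 0)) (fun ω hω => hω.2)]
        rw [hIA, hIB, hwn, hUu, hVu, hm1, hm2]
        set r1 := ∫ ω in {ω | ∀ k, 1 ≤ k → k < n+1 → ¬(X1 k ω = 0 ∧ X2 k ω = 0)}
          ∩ {ω | X1 n ω = -1}, (1:ℝ) ∂μ with hr1d
        set r2 := ∫ ω in {ω | ∀ k, 1 ≤ k → k < n+1 → ¬(X1 k ω = 0 ∧ X2 k ω = 0)}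
          ∩ {ω | X2 n ω = -1}, (1:ℝ) ∂μ with hr2d
        set s1 := ∫ ω in {ω | ∀ k, 1 ≤ k → k < n+1 → ¬(X1 k ω = 0 ∧ X2 k ω = 0)}
          ∩ {ω | X1 n ω = 0}, wl n ω ∂μ with hs1d
        set s2 := ∫ ω in {ω | ∀ k, 1 ≤ k → k < n+1 → ¬(X1 k ω = 0 ∧ X2 k ω = 0)}
          ∩ {ω | X2 n ω = 0}, wl n ω ∂μ with hs2d
        have hcast : ((n+2:ℕ):ℝ) = (n:ℝ)+2 := by push_cast; ring
        rw [hcast]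
        have hcc : (1/(2*(a+b+(n:ℝ))))*(s2+s1) = (1/2)*((1/2)^(l-1)*(a/(a+b))) := by
          rw [hc12]
          field_simp
        calc (1/2) * ((a+b+(n:ℝ)) * ((1/2)^(l-1)*(a/(a+b))))
              + ((1/(2*(a+b+(n:ℝ)))) * s1 + (1/(2*(a+b+(n:ℝ)))) * s2)
              + ((1/2) * ((1/2) * r1 + (1/(2*(a+b+(n:ℝ)))) * s1)
                + (1/2) * ((1/2) * r2 + (1/(2*(a+b+(n:ℝ)))) * s2))
            = (1/2) * ((a+b+(n:ℝ)) * ((1/2)^(l-1)*(a/(a+b))))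
              + (1/(2*(a+b+(n:ℝ))))*(s2+s1)
              + ((1/4)*(r1+r2) + (1/(2*(a+b+(n:ℝ))))*(s2+s1)*(1/2)) := by ring
          _ = (a+b+((n:ℝ)+2)) * ((1/2)^l * (a/(a+b))) := by
              rw [hb12, hcc, hpow]
              ring
  -- derive the two claims from the key induction
  intro l hl
  obtain ⟨bkey, akey⟩ := key l hl
  obtain ⟨n, hn⟩ : ∃ n, n = 2*l-1 := ⟨_, rfl⟩
  have h2l : 2*l = n+1 := by omega
  have hnodd : n % 2 = 1 := by omega
  simp only [h2l, Nat.add_sub_cancel] at bkey akey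
  simp only [h2l, Nat.add_sub_cancel]
  have hSne : (a + b + (n:ℝ)) ≠ 0 := by positivity
  have hS1ne : (a + b + ((n:ℝ)+1)) ≠ 0 := by positivity
  have habne : a + b ≠ 0 := by positivity
  have hpow : ((1:ℝ)/2)^l = (1/2)^(l-1) * (1/2) := by
    rw [← pow_succ]
    congr 1
    omega
  have hmGs : MeasurableSet[F n] {ω | ∀ k, 1 ≤ k → k < n+1 → ¬(X1 k ω = 0 ∧ X2 k ω = 0)} :=
    hGm (n+1) n (le_refl _)
  have hmGs' : MeasurableSet {ω | ∀ k, 1 ≤ k → k < n+1 → ¬(X1 k ω = 0 ∧ X2 k ω = 0)} :=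
    F.le n _ hmGs
  have hmMs' : MeasurableSet {ω | X1 (n+1) ω = 0 ∧ X2 (n+1) ω = 0} := by
    have : {ω | X1 (n+1) ω = 0 ∧ X2 (n+1) ω = 0}
        = {ω | X1 (n+1) ω = 0} ∩ {ω | X2 (n+1) ω = 0} := by
      ext ω; simp [Set.mem_setOf_eq]
    rw [this]; exact (hmX1' (n+1) 0).inter (hmX2' (n+1) 0)
  have hmLvF : MeasurableSet[F n] {ω | X1 n ω = -1 ∨ X2 n ω = -1} := by
    have : {ω | X1 n ω = -1 ∨ X2 n ω = -1} = {ω | X1 n ω = -1} ∪ {ω | X2 n ω = -1} := by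
      ext ω; simp [Set.mem_setOf_eq]
    rw [this]; exact (hmX1 n (-1)).union (hmX2 n (-1))
  have hmLv' : MeasurableSet {ω | X1 n ω = -1 ∨ X2 n ω = -1} := F.le n _ hmLvF
  have hTauSet : {ω | sInf {k | 1 ≤ k ∧ X1 k ω = 0 ∧ X2 k ω = 0} = n+1}
      = {ω | ∀ k, 1 ≤ k → k < n+1 → ¬(X1 k ω = 0 ∧ X2 k ω = 0)}
        ∩ {ω | X1 (n+1) ω = 0 ∧ X2 (n+1) ω = 0} := by
    ext ω
    have htau := hTau l hl ω
    rw [h2l] at htau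
    simp only [Set.mem_setOf_eq, Set.mem_inter_iff]
    exact htau
  -- the common quantity: the meeting-event integrals
  have hwOn : Set.EqOn (wl (n+1))
      (fun ω => wl n ω + ({ω | X1 n ω = -1 ∨ X2 n ω = -1}).indicator (fun _ => (1:ℝ)) ω)
      ({ω | ∀ k, 1 ≤ k → k < n+1 → ¬(X1 k ω = 0 ∧ X2 k ω = 0)}
        ∩ {ω | X1 (n+1) ω = 0 ∧ X2 (n+1) ω = 0}) := by
    rintro ω ⟨hG, hM⟩
    simp only [Set.mem_setOf_eq] at hM
    dsimp only
    rw [hwl n ω, Set.indicator_apply]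
    congr 1
    refine if_congr ?_ rfl rfl
    simp only [Set.mem_setOf_eq]
    omega
  have hwlmeet : ∫ ω in {ω | ∀ k, 1 ≤ k → k < n+1 → ¬(X1 k ω = 0 ∧ X2 k ω = 0)}
        ∩ {ω | X1 (n+1) ω = 0 ∧ X2 (n+1) ω = 0}, wl (n+1) ω ∂μ
      = (1/2) * ((a+b+(n:ℝ)) * ((1/2)^(l-1)*(a/(a+b))))
        + (1/2) * ((1/2)^(l-1)*(a/(a+b))) := by
    rw [setIntegral_congr_fun (hmGs'.inter hmMs') hwOn,
      integral_add ((hintwl n).integrableOn)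
        (((integrable_const (1:ℝ)).indicator hmLv').integrableOn),
      setIntegral_indicator hmLv',
      hretSplit n hnodd _ hmGs _ (a+b+(n:ℝ)) (hadwl n).stronglyMeasurable (hwlub n), akey,
      Set.inter_right_comm,
      hretSplit n hnodd _ (hmGs.inter hmLvF) _ 1 stronglyMeasurable_const
        (fun ω => by norm_num), bkey]
  have hqval : ∫ ω in ({ω | ∀ k, 1 ≤ k → k < n+1 → ¬(X1 k ω = 0 ∧ X2 k ω = 0)}
        ∩ {ω | X1 n ω = -1 ∨ X2 n ω = -1}) ∩ {ω | X1 (n+1) ω = 0 ∧ X2 (n+1) ω = 0},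
        (1:ℝ) ∂μ
      = (1/2) * ((1/2)^(l-1)*(a/(a+b))) := by
    rw [hretSplit n hnodd _ (hmGs.inter hmLvF) _ 1 stronglyMeasurable_const
      (fun ω => by norm_num), bkey]
  constructor
  · -- the expected left fraction
    rw [hTauSet]
    have hfrac : Set.EqOn (fun ω => wl (n+1) ω / (wl (n+1) ω + wr (n+1) ω))
        (fun ω => wl (n+1) ω * (1/(a+b+((n:ℝ)+1))))
        ({ω | ∀ k, 1 ≤ k → k < n+1 → ¬(X1 k ω = 0 ∧ X2 k ω = 0)}
          ∩ {ω | X1 (n+1) ω = 0 ∧ X2 (n+1) ω = 0}) := by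
      intro ω _
      dsimp only
      rw [hsum (n+1) ω]
      push_cast
      ring
    rw [setIntegral_congr_fun (hmGs'.inter hmMs') hfrac, integral_mul_const, hwlmeet, hpow]
    field_simp
    ring
  · -- the probability that the last walker comes from the left
    have hqSet : {ω | sInf {k | 1 ≤ k ∧ X1 k ω = 0 ∧ X2 k ω = 0} = n+1
          ∧ (X1 n ω = -1 ∨ X2 n ω = -1)}
        = ({ω | ∀ k, 1 ≤ k → k < n+1 → ¬(X1 k ω = 0 ∧ X2 k ω = 0)}
          ∩ {ω | X1 n ω = -1 ∨ X2 n ω = -1}) ∩ {ω | X1 (n+1) ω = 0 ∧ X2 (n+1) ω = 0} := by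
      ext ω
      have htau := hTau l hl ω
      rw [h2l] at htau
      simp only [Set.mem_setOf_eq, Set.mem_inter_iff]
      rw [htau]
      tauto
    rw [hqSet]
    have hmeas : (μ (({ω | ∀ k, 1 ≤ k → k < n+1 → ¬(X1 k ω = 0 ∧ X2 k ω = 0)}
          ∩ {ω | X1 n ω = -1 ∨ X2 n ω = -1}) ∩ {ω | X1 (n+1) ω = 0 ∧ X2 (n+1) ω = 0})).toReal
        = ∫ ω in ({ω | ∀ k, 1 ≤ k → k < n+1 → ¬(X1 k ω = 0 ∧ X2 k ω = 0)}
          ∩ {ω | X1 n ω = -1 ∨ X2 n ω = -1}) ∩ {ω | X1 (n+1) ω = 0 ∧ X2 (n+1) ω = 0},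
          (1:ℝ) ∂μ := by
      rw [setIntegral_const, smul_eq_mul, mul_one]
      rfl
    rw [hmeas, hqval, hpow]
    ring
end

section
/- Let (M_n) be a sequence of random variables converging almost surely to M_∞, and let (F_k) be a process with F_{τ_n} = M_n for stopping times τ_n satisfying τ_n ≥ 2n, such that each increment |F_{k+1} - F_k| ≤ 1/(2n) for k ≥ τ_n. If ∑_n P[τ_{n+1} - τ_n ≥ εn] < ∞ for every ε > 0, then F_k converges almost surely to M_∞ as k → ∞. -/
open MeasureTheory Filter Topology
open scoped ENNReal NNReal

/-- Let `M_n → M_∞` a.s., and let `(F_k)` be a process with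
`F_{τ_n} = M_n` for (strictly increasing) random times `τ_n ≥ 2n`, whose increments
after time `τ_n` satisfy `|F_{k+1} - F_k| ≤ 1/(2n)`. If
`∑_n P[τ_{n+1} - τ_n ≥ εn] < ∞` for every `ε > 0`, then `F_k → M_∞` a.s. -/
theorem convergence_transfer
    {Ω : Type*} [MeasurableSpace Ω] (μ : Measure Ω) [IsProbabilityMeasure μ]
    (M : ℕ → Ω → ℝ) (Minf : Ω → ℝ) (Fp : ℕ → Ω → ℝ) (τ : ℕ → Ω → ℕ)
    (hM : ∀ᵐ ω ∂μ, Tendsto (fun n => M n ω) atTop (nhds (Minf ω)))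
    (hFτ : ∀ n ω, Fp (τ n ω) ω = M n ω)
    (hτgrow : ∀ n ω, 2 * n ≤ τ n ω)
    (hτmono : ∀ n ω, τ n ω < τ (n + 1) ω)
    (hincr : ∀ n : ℕ, 1 ≤ n → ∀ k ω, τ n ω ≤ k →
      |Fp (k + 1) ω - Fp k ω| ≤ 1 / (2 * n))
    (htail : ∀ ε : ℝ, 0 < ε →
      Summable fun n : ℕ =>
        (μ {ω | ε * n ≤ ((τ (n + 1) ω : ℝ) - (τ n ω : ℝ))}).toReal) :
    ∀ᵐ ω ∂μ, Tendsto (fun k => Fp k ω) atTop (nhds (Minf ω)) := by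
  -- Borel–Cantelli for each ε = 1/(m+1)
  have hBC : ∀ᵐ ω ∂μ, ∀ m : ℕ, ∀ᶠ n in atTop,
      ¬ ((1 / ((m : ℝ) + 1)) * n ≤ (τ (n + 1) ω : ℝ) - (τ n ω : ℝ)) := by
    rw [ae_all_iff]
    intro m
    set s : ℕ → Set Ω := fun n =>
      {ω | (1 / ((m : ℝ) + 1)) * n ≤ (τ (n + 1) ω : ℝ) - (τ n ω : ℝ)} with hs
    have h := htail (1 / ((m : ℝ) + 1)) (by positivity)
    have hnotmem : ∀ᵐ ω ∂μ, ∀ᶠ n in atTop, ω ∉ s n := by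
      apply MeasureTheory.ae_eventually_notMem
      have hfin : ∀ n, μ (s n) ≠ ⊤ := fun n => measure_ne_top μ _
      have h2 : Summable fun n => (μ (s n)).toNNReal := NNReal.summable_coe.mp h
      have : ∑' n, ((μ (s n)).toNNReal : ℝ≥0∞) ≠ ⊤ :=
        ENNReal.tsum_coe_ne_top_iff_summable.mpr h2
      simpa [ENNReal.coe_toNNReal (hfin _)] using this
    filter_upwards [hnotmem] with ω hω
    exact hω
  filter_upwards [hM, hBC] with ω hMω hBω
  -- increment bound
  have key : ∀ n : ℕ, 1 ≤ n → ∀ d : ℕ,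
      |Fp (τ n ω + d) ω - Fp (τ n ω) ω| ≤ (d : ℝ) / (2 * n) := by
    intro n hn d
    induction d with
    | zero => simp
    | succ d ih =>
      have h1 := hincr n hn (τ n ω + d) ω (Nat.le_add_right _ _)
      have htri : |Fp (τ n ω + (d + 1)) ω - Fp (τ n ω) ω| ≤
          |Fp (τ n ω + d + 1) ω - Fp (τ n ω + d) ω| +
            |Fp (τ n ω + d) ω - Fp (τ n ω) ω| := by
        rw [show τ n ω + (d + 1) = τ n ω + d + 1 from rfl]
        exact abs_sub_le _ _ _
      have hnpos : (0 : ℝ) < 2 * n := by positivity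
      calc |Fp (τ n ω + (d + 1)) ω - Fp (τ n ω) ω|
          ≤ 1 / (2 * n) + (d : ℝ) / (2 * n) := htri.trans (add_le_add h1 ih)
        _ = ((d : ℝ) + 1) / (2 * n) := by field_simp; ring
        _ = ((d + 1 : ℕ) : ℝ) / (2 * n) := by push_cast; ring
  rw [Metric.tendsto_atTop]
  intro δ hδ
  -- choose m with 1/(m+1) < δ
  obtain ⟨m, hm⟩ := exists_nat_one_div_lt hδ
  obtain ⟨N2, hN2⟩ := (hBω m).exists_forall_of_atTop
  rw [Metric.tendsto_atTop] at hMω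
  obtain ⟨N1, hN1⟩ := hMω (δ / 2) (by linarith)
  set N : ℕ := max (max N1 N2) 1 with hN
  refine ⟨τ N ω, fun k hk => ?_⟩
  have hNk : N ≤ k := le_trans (le_trans (by omega) (hτgrow N ω)) hk
  set n : ℕ := Nat.findGreatest (fun j => τ j ω ≤ k) k with hn
  have hspec : τ n ω ≤ k := by rw [hn]; exact Nat.findGreatest_spec (P := fun j => τ j ω ≤ k) (m := N) hNk hk
  have hge : N ≤ n := by rw [hn]; exact Nat.le_findGreatest hNk hk
  have hn1 : 1 ≤ n := le_trans (le_max_right _ _) hge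
  have hlt : k < τ (n + 1) ω := by
    by_cases h : n + 1 ≤ k
    · by_contra hc
      have hgr : n < n + 1 := Nat.lt_succ_self _
      rw [hn] at hgr
      exact Nat.findGreatest_is_greatest hgr h (not_lt.mp hc)
    · calc k < n + 1 := by omega
        _ ≤ 2 * (n + 1) := by omega
        _ ≤ τ (n + 1) ω := hτgrow (n + 1) ω
  -- gap bound at n
  have hgap : (τ (n + 1) ω : ℝ) - (τ n ω : ℝ) < (1 / ((m : ℝ) + 1)) * n := by
    have := hN2 n (le_trans (le_trans (le_max_right _ _) (le_max_left _ _)) hge)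
    linarith [not_le.mp this]
  set d : ℕ := k - τ n ω with hd
  have hkd : k = τ n ω + d := by omega
  have hdb : (d : ℝ) < (1 / ((m : ℝ) + 1)) * n := by
    have : (d : ℝ) ≤ (τ (n + 1) ω : ℝ) - (τ n ω : ℝ) - 1 := by
      have : d + τ n ω + 1 ≤ τ (n + 1) ω := by omega
      push_cast
      have := (Nat.cast_le (α := ℝ)).mpr this
      push_cast at this; linarith
    linarith
  have hnR : (0 : ℝ) < n := by exact_mod_cast hn1
  have hb1 : |Fp k ω - M n ω| < δ / 2 := by
    rw [← hFτ n ω, hkd]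
    refine lt_of_le_of_lt (key n hn1 d) ?_
    rw [div_lt_iff₀ (by positivity)]
    calc (d : ℝ) < (1 / ((m : ℝ) + 1)) * n := hdb
      _ < δ * n := mul_lt_mul_of_pos_right hm hnR
      _ = δ / 2 * (2 * n) := by ring
  have hb2 : |M n ω - Minf ω| < δ / 2 := by
    have := hN1 n (le_trans (le_trans (le_max_left _ _) (le_max_left _ _)) hge)
    rwa [Real.dist_eq] at this
  rw [Real.dist_eq]
  calc |Fp k ω - Minf ω| ≤ |Fp k ω - M n ω| + |M n ω - Minf ω| := abs_sub_le _ _ _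
    _ < δ / 2 + δ / 2 := add_lt_add hb1 hb2
    _ = δ := by ring
end

section
/- A nearest-neighbor random walk in a fixed environment (ω_x)_{x ∈ ℤ} on ℤ (stepping right from x with probability ω_x ∈ (0,1)) is recurrent if and only if both series ∑_{z ≥ 1} ∏_{x=1}^{z} (1-ω_x)/ω_x and ∑_{z ≤ 0} ∏_{x=z}^{0} ω_x/(1-ω_x) diverge. -/
open MeasureTheory Finset Filter Topology

namespace RWREAux

/-- The resistance ratio of the environment. -/
noncomputable def rho (w : ℤ → ℝ) (x : ℤ) : ℝ := (1 - w x) / w x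

/-- Increment of the scale function. -/
noncomputable def G (w : ℤ → ℝ) (z : ℤ) : ℝ :=
  (∏ x ∈ Finset.Icc 1 z, rho w x) / (∏ x ∈ Finset.Icc (z + 1) 0, rho w x)

/-- The scale function. -/
noncomputable def S (w : ℤ → ℝ) (z : ℤ) : ℝ :=
  (∑ x ∈ Finset.Ico 0 z, G w x) - (∑ x ∈ Finset.Ico z 0, G w x)

variable {w : ℤ → ℝ}

lemma rho_pos (hw : ∀ x, w x ∈ Set.Ioo (0 : ℝ) 1) (x : ℤ) : 0 < rho w x :=
  div_pos (by linarith [(hw x).2]) (hw x).1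

lemma G_pos (hw : ∀ x, w x ∈ Set.Ioo (0 : ℝ) 1) (z : ℤ) : 0 < G w z :=
  div_pos (Finset.prod_pos fun x _ => rho_pos hw x)
    (Finset.prod_pos fun x _ => rho_pos hw x)

lemma G_succ (hw : ∀ x, w x ∈ Set.Ioo (0 : ℝ) 1) (z : ℤ) :
    G w z = G w (z - 1) * rho w z := by
  rcases le_or_gt 1 z with hz | hz
  · have h1 : Finset.Icc (z + 1) (0 : ℤ) = ∅ := Finset.Icc_eq_empty (by omega)
    have h2 : Finset.Icc (z - 1 + 1) (0 : ℤ) = ∅ := Finset.Icc_eq_empty (by omega)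
    have h3 : Finset.Icc (1 : ℤ) z = insert z (Finset.Icc 1 (z - 1)) := by
      ext a; simp only [Finset.mem_Icc, Finset.mem_insert]; omega
    rw [G, G, h1, h2, h3, Finset.prod_insert (by simp)]
    simp [mul_comm]
  · have h1 : Finset.Icc (1 : ℤ) z = ∅ := Finset.Icc_eq_empty (by omega)
    have h2 : Finset.Icc (1 : ℤ) (z - 1) = ∅ := Finset.Icc_eq_empty (by omega)
    have h3 : Finset.Icc (z - 1 + 1) (0 : ℤ) = insert z (Finset.Icc (z + 1) 0) := by
      ext a; simp only [Finset.mem_Icc, Finset.mem_insert]; omega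
    rw [G, G, h1, h2, h3, Finset.prod_insert (by simp)]
    have hρ : rho w z ≠ 0 := (rho_pos hw z).ne'
    have hP : (∏ x ∈ Finset.Icc (z + 1) (0 : ℤ), rho w x) ≠ 0 :=
      (Finset.prod_pos fun x _ => rho_pos hw x).ne'
    field_simp

lemma G_key (hw : ∀ x, w x ∈ Set.Ioo (0 : ℝ) 1) (z : ℤ) :
    G w z * w z = G w (z - 1) * (1 - w z) := by
  have h := G_succ hw z
  have hwz : w z ≠ 0 := (hw z).1.ne'
  rw [h, rho]
  field_simp

lemma S_zero : S w 0 = 0 := by simp [S]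

lemma S_succ (z : ℤ) : S w (z + 1) = S w z + G w z := by
  unfold S
  rcases le_or_gt 0 z with h | h
  · have h1 : Finset.Ico (z + 1) (0 : ℤ) = ∅ := Finset.Ico_eq_empty (by omega)
    have h2 : Finset.Ico z (0 : ℤ) = ∅ := Finset.Ico_eq_empty (by omega)
    have h3 : Finset.Ico (0 : ℤ) (z + 1) = insert z (Finset.Ico 0 z) := by
      ext a; simp only [Finset.mem_Ico, Finset.mem_insert]; omega
    rw [h1, h2, h3, Finset.sum_insert (by simp)]
    simp only [Finset.sum_empty]
    ring
  · have h1 : Finset.Ico (0 : ℤ) (z + 1) = ∅ := Finset.Ico_eq_empty (by omega)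
    have h2 : Finset.Ico (0 : ℤ) z = ∅ := Finset.Ico_eq_empty (by omega)
    have h3 : Finset.Ico z (0 : ℤ) = insert z (Finset.Ico (z + 1) 0) := by
      ext a; simp only [Finset.mem_Ico, Finset.mem_insert]; omega
    rw [h1, h2, h3, Finset.sum_insert (by simp)]
    simp only [Finset.sum_empty]
    ring

lemma S_pred (z : ℤ) : S w (z - 1) = S w z - G w (z - 1) := by
  have h := S_succ (w := w) (z - 1)
  have h2 : z - 1 + 1 = z := by ring
  rw [h2] at h
  linarith

lemma S_mono (hw : ∀ x, w x ∈ Set.Ioo (0 : ℝ) 1) : StrictMono (S w) :=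
  strictMono_int_of_lt_succ fun z => by rw [S_succ]; linarith [G_pos hw z]

lemma G_zero : G w 0 = 1 := by
  rw [G]
  rw [show ((0 : ℤ) + 1) = 1 from rfl]
  rw [Finset.Icc_eq_empty (by omega : ¬(1 : ℤ) ≤ 0)]
  simp

lemma S_ofNat (n : ℕ) :
    S w ((n : ℤ) + 1) = 1 + ∑ k ∈ Finset.range n, G w ((k : ℤ) + 1) := by
  induction n with
  | zero =>
    rw [show ((0 : ℕ) : ℤ) + 1 = 0 + 1 by norm_num, S_succ, S_zero, G_zero]
    simp
  | succ n ih =>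
    have h : ((n + 1 : ℕ) : ℤ) + 1 = ((n : ℤ) + 1) + 1 := by push_cast; ring
    rw [h, S_succ, ih, Finset.sum_range_succ]
    push_cast
    ring

lemma S_negNat (n : ℕ) :
    S w (-(n : ℤ)) = -∑ k ∈ Finset.range n, G w (-(k : ℤ) - 1) := by
  induction n with
  | zero => simp [S_zero]
  | succ n ih =>
    have h : S w (-(n : ℤ) - 1) = S w (-(n : ℤ)) - G w (-(n : ℤ) - 1) := S_pred _
    have h2 : (-((n + 1 : ℕ) : ℤ)) = -(n : ℤ) - 1 := by push_cast; ring
    rw [h2, Finset.sum_range_succ, h, ih]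
    push_cast
    ring

lemma S_le (hw : ∀ x, w x ∈ Set.Ioo (0 : ℝ) 1)
    (h : Summable fun z : ℕ => G w ((z : ℤ) + 1)) (z : ℤ) :
    S w z ≤ 1 + ∑' z : ℕ, G w ((z : ℤ) + 1) := by
  have htn : 0 ≤ ∑' z : ℕ, G w ((z : ℤ) + 1) :=
    tsum_nonneg fun z => (G_pos hw _).le
  rcases le_or_gt z 0 with hz | hz
  · have h1 : S w z ≤ S w 0 := (S_mono hw).monotone hz
    rw [S_zero] at h1
    linarith
  · have hn : z = ((z.toNat - 1 : ℕ) : ℤ) + 1 := by omega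
    rw [hn, S_ofNat]
    have h2 := Summable.sum_le_tsum (Finset.range (z.toNat - 1))
      (fun i _ => (G_pos hw ((i : ℤ) + 1)).le) h
    linarith

lemma neg_S_le (hw : ∀ x, w x ∈ Set.Ioo (0 : ℝ) 1)
    (h : Summable fun z : ℕ => G w (-(z : ℤ) - 1)) (z : ℤ) :
    -S w z ≤ ∑' z : ℕ, G w (-(z : ℤ) - 1) := by
  have htn : 0 ≤ ∑' z : ℕ, G w (-(z : ℤ) - 1) :=
    tsum_nonneg fun z => (G_pos hw _).le
  rcases le_or_gt 0 z with hz | hz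
  · have h1 : S w 0 ≤ S w z := (S_mono hw).monotone hz
    rw [S_zero] at h1
    linarith
  · have hn : z = -(((-z).toNat : ℕ) : ℤ) := by omega
    rw [hn, S_negNat, neg_neg]
    have h2 := Summable.sum_le_tsum (Finset.range (-z).toNat)
      (fun i _ => (G_pos hw (-(i : ℤ) - 1)).le) h
    linarith

lemma S_tendsto_atTop (hw : ∀ x, w x ∈ Set.Ioo (0 : ℝ) 1)
    (h : ¬Summable fun z : ℕ => G w ((z : ℤ) + 1)) :
    Tendsto (S w) atTop atTop := by
  apply tendsto_atTop_atTop_of_monotone (S_mono hw).monotone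
  intro C
  have ht := (not_summable_iff_tendsto_nat_atTop_of_nonneg
    (fun z => (G_pos hw ((z : ℤ) + 1)).le)).1 h
  obtain ⟨n, hn⟩ := (ht.eventually_ge_atTop C).exists
  exact ⟨(n : ℤ) + 1, by rw [S_ofNat]; linarith⟩

lemma S_tendsto_atBot (hw : ∀ x, w x ∈ Set.Ioo (0 : ℝ) 1)
    (h : ¬Summable fun z : ℕ => G w (-(z : ℤ) - 1)) :
    Tendsto (S w) atBot atBot := by
  apply tendsto_atBot_atBot_of_monotone (S_mono hw).monotone
  intro C
  have ht := (not_summable_iff_tendsto_nat_atTop_of_nonneg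
    (fun z => (G_pos hw (-(z : ℤ) - 1)).le)).1 h
  obtain ⟨n, hn⟩ := (ht.eventually_ge_atTop (-C)).exists
  exact ⟨-(n : ℤ), by rw [S_negNat]; linarith⟩

lemma right_eq (w : ℤ → ℝ) :
    (fun z : ℕ => ∏ x ∈ Finset.Icc (1 : ℤ) ((z : ℤ) + 1), (1 - w x) / w x) =
      fun z : ℕ => G w ((z : ℤ) + 1) := by
  funext z
  rw [G, Finset.Icc_eq_empty (by omega : ¬((z : ℤ) + 1 + 1) ≤ 0)]
  simp [rho]

lemma left_eq (hw : ∀ x, w x ∈ Set.Ioo (0 : ℝ) 1) :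
    (fun z : ℕ => ∏ x ∈ Finset.Icc (-(z : ℤ)) 0, w x / (1 - w x)) =
      fun z : ℕ => G w (-(z : ℤ) - 1) := by
  funext z
  rw [G]
  have h1 : Finset.Icc (1 : ℤ) (-(z : ℤ) - 1) = ∅ := Finset.Icc_eq_empty (by omega)
  have h2 : (-(z : ℤ) - 1) + 1 = -(z : ℤ) := by ring
  rw [h1, h2, Finset.prod_empty, one_div, ← Finset.prod_inv_distrib]
  apply Finset.prod_congr rfl
  intro x _
  rw [rho, inv_div]

/-- The freezing lemma: a martingale starting at `0`, stopped before leaving a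
decreasing family of adapted events on which it stays bounded above, converges
a.e. on the intersection of the events. -/
lemma freeze {Ω : Type*} [m : MeasurableSpace Ω] {μ : Measure Ω} [IsProbabilityMeasure μ]
    {F : Filtration ℕ m} {M : ℕ → Ω → ℝ} (hM : Martingale M F μ)
    (hM0 : ∀ ω, M 0 ω = 0)
    {D : ℕ → Set Ω} (hDmeas : ∀ n, MeasurableSet[F n] (D n))
    (hanti : ∀ n, D (n + 1) ⊆ D n)
    {c : ℝ} (hbd : ∀ n ω, ω ∈ D n → M (n + 1) ω ≤ c) :
    ∀ᵐ ω ∂μ, (∀ n, ω ∈ D n) → ∃ r, Tendsto (fun n => M n ω) atTop (𝓝 r) := by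
  classical
  set ξ : ℕ → Ω → ℝ := fun n => (D n).indicator fun _ => (1 : ℝ) with hξdef
  have hξa : StronglyAdapted F ξ := fun n => stronglyMeasurable_const.indicator (hDmeas n)
  have hξb : ∀ n ω, ξ n ω ≤ 1 := by
    intro n ω; by_cases h : ω ∈ D n <;> simp [hξdef, h]
  have hξn : ∀ n ω, 0 ≤ ξ n ω := by
    intro n ω; by_cases h : ω ∈ D n <;> simp [hξdef, h]
  set Z : ℕ → Ω → ℝ := fun n => ∑ k ∈ Finset.range n, ξ k * (M (k + 1) - M k) with hZdef
  have hZsub : Submartingale Z F μ := hM.submartingale.sum_mul_sub hξa hξb hξn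
  have hZsuper : Supermartingale Z F μ := by
    have h1 : Submartingale
        (fun n => ∑ k ∈ Finset.range n, ξ k * ((-M) (k + 1) - (-M) k)) F μ :=
      hM.neg.submartingale.sum_mul_sub hξa hξb hξn
    have h2 : (fun n => ∑ k ∈ Finset.range n, ξ k * ((-M) (k + 1) - (-M) k)) =
        fun n => -Z n := by
      funext n; ext ω
      simp only [hZdef, Finset.sum_apply, Pi.mul_apply, Pi.sub_apply, Pi.neg_apply,
        ← Finset.sum_neg_distrib]
      apply Finset.sum_congr rfl
      intro k _
      ring
    rw [h2] at h1
    have h3 : Submartingale (-Z) F μ := h1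
    have h4 := h3.neg
    rwa [neg_neg] at h4
  have hZmart : Martingale Z F μ := martingale_iff.2 ⟨hZsuper, hZsub⟩
  have hZapp : ∀ n ω, Z n ω = ∑ k ∈ Finset.range n, ξ k ω * (M (k + 1) ω - M k ω) := by
    intro n ω
    simp [hZdef, Finset.sum_apply]
  -- telescoping on the events
  have htel : ∀ n, ∀ ω, ω ∈ D n → Z n ω = M n ω ∧ Z (n + 1) ω = M (n + 1) ω := by
    intro n
    induction n with
    | zero =>
      intro ω hω
      constructor
      · simp [hZapp, hM0]
      · rw [hZapp]
        simp [Finset.sum_range_one, hξdef, Set.indicator_of_mem hω, hM0]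
    | succ n ih =>
      intro ω hω
      have hωn : ω ∈ D n := hanti n hω
      refine ⟨(ih ω hωn).2, ?_⟩
      have hZs : Z (n + 2) ω = Z (n + 1) ω + ξ (n + 1) ω * (M (n + 2) ω - M (n + 1) ω) := by
        rw [hZapp, hZapp, Finset.sum_range_succ]
      rw [hZs, (ih ω hωn).2, hξdef]
      simp [Set.indicator_of_mem hω]
  -- uniform upper bound on Z
  have hbound : ∀ n ω, Z n ω ≤ max c 0 := by
    intro n
    induction n with
    | zero => intro ω; simp [hZapp]
    | succ n ih =>
      intro ω
      by_cases hω : ω ∈ D n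
      · rw [(htel n ω hω).2]
        exact le_max_of_le_left (hbd n ω hω)
      · have hz : Z (n + 1) ω = Z n ω := by
          rw [hZapp, hZapp, Finset.sum_range_succ, hξdef]
          simp [Set.indicator_of_notMem hω]
        rw [hz]; exact ih ω
  -- the nonnegative martingale
  set N : ℕ → Ω → ℝ := (fun _ _ => max c 0) - Z with hNdef
  have hNapp : ∀ n ω, N n ω = max c 0 - Z n ω := fun n ω => rfl
  have hNmart : Martingale N F μ := (martingale_const F μ (max c 0)).sub hZmart
  have hNint : ∀ n, Integrable (N n) μ := fun n => hNmart.integrable n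
  have hNnonneg : ∀ n ω, 0 ≤ N n ω := by
    intro n ω; rw [hNapp]; linarith [hbound n ω]
  have hmean : ∀ n, ∫ ω, N n ω ∂μ = max c 0 := by
    intro n
    have h0 : μ[N n|F 0] =ᵐ[μ] N 0 := hNmart.condExp_ae_eq (Nat.zero_le n)
    have h1 : ∫ ω, N n ω ∂μ = ∫ ω, (μ[N n|F 0]) ω ∂μ := (integral_condExp (F.le 0)).symm
    rw [h1, integral_congr_ae h0]
    have h2 : ∀ ω, N 0 ω = max c 0 := by
      intro ω; rw [hNapp, hZapp]; simp
    simp only [h2]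
    simp
  have hbdd : ∀ n, eLpNorm (N n) 1 μ ≤ ENNReal.ofReal (max c 0) := by
    intro n
    rw [eLpNorm_one_eq_lintegral_enorm, ← ofReal_integral_norm_eq_lintegral_enorm (hNint n)]
    apply ENNReal.ofReal_le_ofReal
    have h1 : ∀ ω, ‖N n ω‖ = N n ω := fun ω => Real.norm_of_nonneg (hNnonneg n ω)
    have h2 : ∫ ω, ‖N n ω‖ ∂μ = max c 0 := by
      simp only [h1]
      exact hmean n
    exact le_of_eq h2
  have hconv := hNmart.submartingale.exists_ae_tendsto_of_bdd hbdd
  filter_upwards [hconv] with ω hω hD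
  obtain ⟨r, hr⟩ := hω
  refine ⟨max c 0 - r, ?_⟩
  have hfn : (fun n => M n ω) = fun n => max c 0 - N n ω := by
    funext n
    rw [hNapp, (htel n ω (hD n)).1]
    ring
  rw [hfn]
  exact tendsto_const_nhds.sub hr

/-- `S w ∘ X` is a martingale. -/
lemma mart_S (hw : ∀ x, w x ∈ Set.Ioo (0 : ℝ) 1)
    {Ω : Type*} [m : MeasurableSpace Ω] (μ : Measure Ω) [IsProbabilityMeasure μ]
    (F : Filtration ℕ m) (X : ℕ → Ω → ℤ) (hadX : StronglyAdapted F X)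
    (hXbd : ∀ (n : ℕ) (ω : Ω), -(n : ℤ) ≤ X n ω ∧ X n ω ≤ n)
    (hstep : ∀ n ω, X (n + 1) ω = X n ω + 1 ∨ X (n + 1) ω = X n ω - 1)
    (hcond : ∀ n,
      μ[Set.indicator {ω | X (n + 1) ω = X n ω + 1} (fun _ => (1 : ℝ)) | F n]
        =ᵐ[μ] fun ω => w (X n ω)) :
    Martingale (fun n ω => S w (X n ω)) F μ := by
  have hcomp : ∀ (v : ℤ → ℝ) (n : ℕ), StronglyMeasurable[F n] fun ω => v (X n ω) :=
    fun v n => (continuous_of_discreteTopology (f := v)).comp_stronglyMeasurable (hadX n)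
  have hbdd_comp : ∀ (v : ℤ → ℝ) (n : ℕ), ∃ C, ∀ ω, ‖v (X n ω)‖ ≤ C := by
    intro v n
    refine ⟨(Finset.Icc (-(n : ℤ)) n).sup' ⟨0, Finset.mem_Icc.2 (by omega)⟩
      (fun z => ‖v z‖), fun ω => ?_⟩
    exact Finset.le_sup' (fun z => ‖v z‖) (Finset.mem_Icc.2 (hXbd n ω))
  have hint : ∀ (v : ℤ → ℝ) (n : ℕ), Integrable (fun ω => v (X n ω)) μ := by
    intro v n
    obtain ⟨C, hC⟩ := hbdd_comp v n
    exact (memLp_top_of_bound ((hcomp v n).mono (F.le n)).aestronglyMeasurable C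
      (ae_of_all μ hC)).integrable le_top
  apply martingale_nat (fun n => hcomp (S w) n) (fun n => hint (S w) n)
  intro n
  have hAmeas : MeasurableSet {ω | X (n + 1) ω = X n ω + 1} := by
    have h1 : Measurable (X (n + 1)) := ((hadX (n + 1)).mono (F.le (n + 1))).measurable
    have h2 : Measurable (X n) := ((hadX n).mono (F.le n)).measurable
    have heq : {ω | X (n + 1) ω = X n ω + 1} =
        (fun ω => X (n + 1) ω - X n ω) ⁻¹' {1} := by
      ext ω; simp only [Set.mem_setOf_eq, Set.mem_preimage, Set.mem_singleton_iff]; omega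
    rw [heq]
    exact (h1.sub h2) (measurableSet_singleton 1)
  have hdec : (fun ω => S w (X (n + 1) ω)) =
      (fun ω => S w (X n ω) - G w (X n ω - 1)) +
        fun ω => (G w (X n ω) + G w (X n ω - 1)) *
          Set.indicator {ω | X (n + 1) ω = X n ω + 1} (fun _ => (1 : ℝ)) ω := by
    funext ω
    rcases hstep n ω with h | h
    · have hA : ω ∈ {ω | X (n + 1) ω = X n ω + 1} := h
      simp only [Pi.add_apply, Set.indicator_of_mem hA]
      rw [h, S_succ]
      ring
    · have hA : ω ∉ {ω | X (n + 1) ω = X n ω + 1} := by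
        intro hh
        have : X (n + 1) ω = X n ω + 1 := hh
        omega
      simp only [Pi.add_apply, Set.indicator_of_notMem hA, mul_zero, add_zero]
      rw [h, S_pred]
  have hindint : Integrable (Set.indicator {ω | X (n + 1) ω = X n ω + 1}
      (fun _ => (1 : ℝ))) μ := (integrable_const (1 : ℝ)).indicator hAmeas
  have hf2int : Integrable ((fun ω => G w (X n ω) + G w (X n ω - 1)) *
      Set.indicator {ω | X (n + 1) ω = X n ω + 1} (fun _ => (1 : ℝ))) μ :=
    by
      obtain ⟨C, hC⟩ := hbdd_comp (fun z => G w z + G w (z - 1)) n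
      exact hindint.bdd_mul (c := C) ((hcomp (fun z => G w z + G w (z - 1)) n).mono
        (F.le n)).aestronglyMeasurable (ae_of_all μ hC)
  have hstep1 : μ[fun ω => S w (X (n + 1) ω)|F n] =ᵐ[μ]
      μ[fun ω => S w (X n ω) - G w (X n ω - 1)|F n] +
        μ[(fun ω => G w (X n ω) + G w (X n ω - 1)) *
          Set.indicator {ω | X (n + 1) ω = X n ω + 1} (fun _ => (1 : ℝ))|F n] := by
    rw [hdec]
    exact condExp_add (m := F n) (hint (fun z => S w z - G w (z - 1)) n) hf2int
  have hstep2 : μ[fun ω => S w (X n ω) - G w (X n ω - 1)|F n] =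
      fun ω => S w (X n ω) - G w (X n ω - 1) :=
    condExp_of_stronglyMeasurable (F.le n)
      (hcomp (fun z => S w z - G w (z - 1)) n) (hint (fun z => S w z - G w (z - 1)) n)
  have hstep3 : μ[(fun ω => G w (X n ω) + G w (X n ω - 1)) *
      Set.indicator {ω | X (n + 1) ω = X n ω + 1} (fun _ => (1 : ℝ))|F n] =ᵐ[μ]
      (fun ω => G w (X n ω) + G w (X n ω - 1)) *
        μ[Set.indicator {ω | X (n + 1) ω = X n ω + 1} (fun _ => (1 : ℝ))|F n] :=
    condExp_mul_of_stronglyMeasurable_left (hcomp (fun z => G w z + G w (z - 1)) n)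
      hf2int hindint
  have hstep4 : (fun ω => G w (X n ω) + G w (X n ω - 1)) *
      μ[Set.indicator {ω | X (n + 1) ω = X n ω + 1} (fun _ => (1 : ℝ))|F n] =ᵐ[μ]
      fun ω => (G w (X n ω) + G w (X n ω - 1)) * w (X n ω) := by
    filter_upwards [hcond n] with ω hω
    simp only [Pi.mul_apply, hω]
  have hfinal : (fun ω => (S w (X n ω) - G w (X n ω - 1)) +
      (G w (X n ω) + G w (X n ω - 1)) * w (X n ω)) = fun ω => S w (X n ω) := by
    funext ω
    have hk := G_key hw (X n ω)
    ring_nf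
    ring_nf at hk
    linarith
  calc (fun ω => S w (X n ω))
      =ᵐ[μ] (fun ω => S w (X n ω) - G w (X n ω - 1)) +
        fun ω => (G w (X n ω) + G w (X n ω - 1)) * w (X n ω) := by
        rw [← hfinal]; rfl
  _ =ᵐ[μ] μ[fun ω => S w (X (n + 1) ω)|F n] := by
      have h5 := hstep1.symm
      refine EventuallyEq.trans ?_ h5
      rw [hstep2]
      exact EventuallyEq.add EventuallyEq.rfl (hstep3.trans hstep4).symm

end RWREAux

open RWREAux

/-- A nearest-neighbor random walk on `ℤ` in a fixed environment
`(w_x)`, stepping right from `x` with probability `w x ∈ (0,1)`, is recurrent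
(visits `0` infinitely often a.s.) if and only if both series
`∑_{z ≥ 1} ∏_{x=1}^{z} (1-w_x)/w_x` and `∑_{z ≤ 0} ∏_{x=z}^{0} w_x/(1-w_x)`
diverge. -/
theorem rwre_recurrence_criterion
    (w : ℤ → ℝ) (hw : ∀ x, w x ∈ Set.Ioo (0 : ℝ) 1)
    {Ω : Type*} [m : MeasurableSpace Ω] (μ : Measure Ω) [IsProbabilityMeasure μ]
    (F : Filtration ℕ m) (X : ℕ → Ω → ℤ) (hadX : StronglyAdapted F X)
    (hX0 : X 0 = fun _ => 0)
    (hstep : ∀ n ω, X (n + 1) ω = X n ω + 1 ∨ X (n + 1) ω = X n ω - 1)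
    (hcond : ∀ n,
      μ[Set.indicator {ω | X (n + 1) ω = X n ω + 1} (fun _ => (1 : ℝ)) | F n]
        =ᵐ[μ] fun ω => w (X n ω)) :
    (∀ᵐ ω ∂μ, {n : ℕ | X n ω = 0}.Infinite) ↔
      (¬ Summable (fun z : ℕ =>
          ∏ x ∈ Finset.Icc (1 : ℤ) ((z : ℤ) + 1), (1 - w x) / w x) ∧
       ¬ Summable (fun z : ℕ =>
          ∏ x ∈ Finset.Icc (-(z : ℤ)) 0, w x / (1 - w x))) := by
  classical
  have hXbd : ∀ (n : ℕ) (ω : Ω), -(n : ℤ) ≤ X n ω ∧ X n ω ≤ n := by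
    intro n
    induction n with
    | zero => intro ω; simp [hX0]
    | succ n ih =>
      intro ω
      obtain ⟨h1, h2⟩ := ih ω
      rcases hstep n ω with h | h <;> constructor <;> push_cast <;> omega
  have hM : Martingale (fun n ω => S w (X n ω)) F μ :=
    mart_S hw μ F X hadX hXbd hstep hcond
  have hM0 : ∀ ω, S w (X 0 ω) = 0 := by
    intro ω; rw [hX0]; exact S_zero
  -- pathwise window escape lemma
  have hwindow : ∀ (ω : Ω) (r : ℝ), Tendsto (fun n => S w (X n ω)) atTop (𝓝 r) →
      ∀ m1 m2 : ℤ, ∃ N, ∀ n, N ≤ n → X n ω < m1 ∨ m2 < X n ω := by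
    intro ω r hr m1 m2
    rcases lt_or_ge m2 m1 with hlt | hle
    · exact ⟨0, fun n _ => by omega⟩
    have hne : (Finset.Icc m1 m2).Nonempty := ⟨m1, Finset.mem_Icc.2 ⟨le_rfl, hle⟩⟩
    set δ := (Finset.Icc m1 m2).inf' hne fun z => min (G w z) (G w (z - 1)) with hδdef
    have hδ : 0 < δ :=
      (Finset.lt_inf'_iff hne).2 fun z _ => lt_min (G_pos hw z) (G_pos hw (z - 1))
    have hdiff : Tendsto (fun n => S w (X (n + 1) ω) - S w (X n ω)) atTop (𝓝 0) := by
      have h1 : Tendsto (fun n => S w (X (n + 1) ω)) atTop (𝓝 r) :=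
        hr.comp (tendsto_add_atTop_nat 1)
      have h2 := h1.sub hr
      simpa using h2
    have hev := (Metric.tendsto_atTop.1 hdiff) δ hδ
    obtain ⟨N, hN⟩ := hev
    refine ⟨N, fun n hn => ?_⟩
    by_contra hcon
    push_neg at hcon
    obtain ⟨h1, h2⟩ := hcon
    have hmem : X n ω ∈ Finset.Icc m1 m2 := Finset.mem_Icc.2 ⟨h1, h2⟩
    have hδle : δ ≤ min (G w (X n ω)) (G w (X n ω - 1)) :=
      Finset.inf'_le _ hmem
    have habs := hN n hn
    rw [Real.dist_eq, sub_zero] at habs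
    rcases hstep n ω with h | h
    · rw [h, S_succ] at habs
      have he : S w (X n ω) + G w (X n ω) - S w (X n ω) = G w (X n ω) := by ring
      rw [he, abs_of_pos (G_pos hw _)] at habs
      have := min_le_left (G w (X n ω)) (G w (X n ω - 1))
      linarith
    · rw [h, S_pred] at habs
      have he : S w (X n ω) - G w (X n ω - 1) - S w (X n ω) = -(G w (X n ω - 1)) := by ring
      rw [he, abs_neg, abs_of_pos (G_pos hw _)] at habs
      have := min_le_right (G w (X n ω)) (G w (X n ω - 1))
      linarith
  constructor
  · -- recurrence implies divergence of both series
    intro hrec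
    constructor
    · intro hsum
      rw [right_eq w] at hsum
      have hfr := freeze hM hM0 (D := fun _ => Set.univ)
        (fun n => MeasurableSet.univ) (fun n => Set.Subset.refl _)
        (c := 1 + ∑' z : ℕ, G w ((z : ℤ) + 1))
        (fun n ω _ => S_le hw hsum (X (n + 1) ω))
      obtain ⟨ω, hω1, hω2⟩ := (hrec.and hfr).exists
      obtain ⟨r, hr⟩ := hω2 fun n => trivial
      obtain ⟨N, hN⟩ := hwindow ω r hr 0 0
      have hfin : {n : ℕ | X n ω = 0}.Finite := by
        apply Set.Finite.subset (Set.finite_Iio N)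
        intro n hn
        simp only [Set.mem_setOf_eq] at hn
        by_contra hge
        simp only [Set.mem_Iio, not_lt] at hge
        rcases hN n hge with h | h <;> omega
      exact hω1 hfin
    · intro hsum
      rw [left_eq hw] at hsum
      have hM0' : ∀ ω, (-(fun n ω => S w (X n ω))) 0 ω = 0 := by
        intro ω; simp [hM0]
      have hfr := freeze hM.neg hM0' (D := fun _ => Set.univ)
        (fun n => MeasurableSet.univ) (fun n => Set.Subset.refl _)
        (c := ∑' z : ℕ, G w (-(z : ℤ) - 1))
        (fun n ω _ => by
          simpa using neg_S_le hw hsum (X (n + 1) ω))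
      obtain ⟨ω, hω1, hω2⟩ := (hrec.and hfr).exists
      obtain ⟨r, hr⟩ := hω2 fun n => trivial
      have hr' : Tendsto (fun n => S w (X n ω)) atTop (𝓝 (-r)) := by
        have := hr.neg
        simpa using this
      obtain ⟨N, hN⟩ := hwindow ω (-r) hr' 0 0
      have hfin : {n : ℕ | X n ω = 0}.Finite := by
        apply Set.Finite.subset (Set.finite_Iio N)
        intro n hn
        simp only [Set.mem_setOf_eq] at hn
        by_contra hge
        simp only [Set.mem_Iio, not_lt] at hge
        rcases hN n hge with h | h <;> omega
      exact hω1 hfin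
  · -- divergence of both series implies recurrence
    rintro ⟨hR, hL⟩
    rw [right_eq w] at hR
    rw [left_eq hw] at hL
    have htop := S_tendsto_atTop hw hR
    have hbot := S_tendsto_atBot hw hL
    have hup : ∀ᵐ ω ∂μ, ∀ b : ℕ, ∃ n, (b : ℤ) < X n ω := by
      rw [ae_all_iff]
      intro b
      have hDm : ∀ n, MeasurableSet[F n] {ω | ∀ j ≤ n, X j ω ≤ (b : ℤ)} := by
        intro n
        have heq : {ω | ∀ j ≤ n, X j ω ≤ (b : ℤ)} =
            ⋂ j ∈ Set.Iic n, X j ⁻¹' Set.Iic (b : ℤ) := by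
          ext ω; simp [Set.mem_iInter]
        rw [heq]
        refine MeasurableSet.biInter (Set.to_countable _) fun j hj => ?_
        exact F.mono hj _ (((hadX j).measurable) measurableSet_Iic)
      have hanti : ∀ n, {ω | ∀ j ≤ n + 1, X j ω ≤ (b : ℤ)} ⊆
          {ω | ∀ j ≤ n, X j ω ≤ (b : ℤ)} := fun n ω hω j hj => hω j (by omega)
      have hbd : ∀ n ω, ω ∈ {ω | ∀ j ≤ n, X j ω ≤ (b : ℤ)} →
          S w (X (n + 1) ω) ≤ S w ((b : ℤ) + 1) := by
        intro n ω hω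
        have h1 : X n ω ≤ (b : ℤ) := hω n le_rfl
        have h2 : X (n + 1) ω ≤ (b : ℤ) + 1 := by
          rcases hstep n ω with h | h <;> omega
        exact (S_mono hw).monotone h2
      have hfr := freeze hM hM0 hDm hanti hbd
      filter_upwards [hfr] with ω hω
      by_contra hcon
      push_neg at hcon
      obtain ⟨r, hr⟩ := hω fun n j hj => hcon j
      have hXbot : Tendsto (fun n => X n ω) atTop atBot := by
        rw [tendsto_atBot]
        intro mm
        obtain ⟨N, hN⟩ := hwindow ω r hr mm ((b : ℤ) + 1)
        rw [eventually_atTop]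
        refine ⟨N, fun n hn => ?_⟩
        rcases hN n hn with h | h
        · omega
        · exact absurd (hcon n) (by omega)
      have hcontra := hbot.comp hXbot
      exact (hr.not_tendsto (disjoint_nhds_atBot r)) hcontra
    have hdown : ∀ᵐ ω ∂μ, ∀ b : ℕ, ∃ n, X n ω < -(b : ℤ) := by
      rw [ae_all_iff]
      intro b
      have hDm : ∀ n, MeasurableSet[F n] {ω | ∀ j ≤ n, -(b : ℤ) ≤ X j ω} := by
        intro n
        have heq : {ω | ∀ j ≤ n, -(b : ℤ) ≤ X j ω} =
            ⋂ j ∈ Set.Iic n, X j ⁻¹' Set.Ici (-(b : ℤ)) := by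
          ext ω; simp [Set.mem_iInter]
        rw [heq]
        refine MeasurableSet.biInter (Set.to_countable _) fun j hj => ?_
        exact F.mono hj _ (((hadX j).measurable) measurableSet_Ici)
      have hanti : ∀ n, {ω | ∀ j ≤ n + 1, -(b : ℤ) ≤ X j ω} ⊆
          {ω | ∀ j ≤ n, -(b : ℤ) ≤ X j ω} := fun n ω hω j hj => hω j (by omega)
      have hM0' : ∀ ω, (-(fun n ω => S w (X n ω))) 0 ω = 0 := by
        intro ω; simp [hM0]
      have hbd : ∀ n ω, ω ∈ {ω | ∀ j ≤ n, -(b : ℤ) ≤ X j ω} →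
          (-(fun n ω => S w (X n ω))) (n + 1) ω ≤ -S w (-(b : ℤ) - 1) := by
        intro n ω hω
        have h1 : -(b : ℤ) ≤ X n ω := hω n le_rfl
        have h2 : -(b : ℤ) - 1 ≤ X (n + 1) ω := by
          rcases hstep n ω with h | h <;> omega
        have h3 := (S_mono hw).monotone h2
        simp only [Pi.neg_apply]
        linarith
      have hfr := freeze hM.neg hM0' hDm hanti hbd
      filter_upwards [hfr] with ω hω
      by_contra hcon
      push_neg at hcon
      obtain ⟨r, hr⟩ := hω fun n j hj => hcon j
      have hr' : Tendsto (fun n => S w (X n ω)) atTop (𝓝 (-r)) := by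
        have := hr.neg
        simpa using this
      have hXtop : Tendsto (fun n => X n ω) atTop atTop := by
        rw [tendsto_atTop]
        intro mm
        obtain ⟨N, hN⟩ := hwindow ω (-r) hr' (-(b : ℤ) - 1) mm
        rw [eventually_atTop]
        refine ⟨N, fun n hn => ?_⟩
        rcases hN n hn with h | h
        · exact absurd (hcon n) (by omega)
        · omega
      have hcontra := htop.comp hXtop
      exact (hr'.not_tendsto (disjoint_nhds_atTop (-r))) hcontra
    filter_upwards [hup, hdown] with ω h1 h2
    -- discrete intermediate value: between a positive and a negative value there is a zero
    have hIVT : ∀ (d a : ℕ), 0 < X a ω → X (a + d) ω < 0 →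
        ∃ k, a ≤ k ∧ k ≤ a + d ∧ X k ω = 0 := by
      intro d
      induction d with
      | zero => intro a hpos hneg; simp only [Nat.add_zero] at hneg; omega
      | succ d ih =>
        intro a hpos hneg
        rcases lt_trichotomy (X (a + 1) ω) 0 with h | h | h
        · exfalso
          rcases hstep a ω with hs | hs <;> omega
        · exact ⟨a + 1, by omega, by omega, h⟩
        · have hneg' : X (a + 1 + d) ω < 0 := by
            have he : a + 1 + d = a + (d + 1) := by omega
            rw [he]; exact hneg
          obtain ⟨k, hk1, hk2, hk3⟩ := ih (a + 1) h hneg'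
          exact ⟨k, by omega, by omega, hk3⟩
    apply Set.infinite_of_not_bddAbove
    rintro ⟨B, hB⟩
    obtain ⟨n1, hn1⟩ := h1 (B + 1)
    have hn1b : B + 1 < n1 := by
      have := (hXbd n1 ω).2
      omega
    obtain ⟨n2, hn2⟩ := h2 n1
    have hn12 : n1 < n2 := by
      have := (hXbd n2 ω).1
      omega
    have hpos : 0 < X n1 ω := by omega
    have hneg : X (n1 + (n2 - n1)) ω < 0 := by
      have he : n1 + (n2 - n1) = n2 := by omega
      rw [he]; omega
    obtain ⟨k, hk1, hk2, hk3⟩ := hIVT (n2 - n1) n1 hpos hneg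
    have hkmem : k ∈ {n : ℕ | X n ω = 0} := hk3
    have := hB hkmem
    omega
end
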